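/- arXiv:1212.3895 — 13 statements merged into one kernel-verified Lean document; each statement's English description precedes it below -/
import Mathlib

section
/- For twice continuously differentiable functions f, g on an interval I with g'' > 0, if f''(t) = t·g''(t) for all t in I, then for all a, b in I with a ≠ b, the quotient (f(a) + f(b) - 2f((a+b)/2)) / (g(a) + g(b) - 2g((a+b)/2)) lies between min{a,b} and max{a,b}. -/
open Set

/-- Second derivative of `f - c*g` on an open set where both are `C²`. -/
lemma deriv2_sub_const_mul {f g : ℝ → ℝ} {S : Set ℝ} (hS : IsOpen S)
    (hf : ContDiffOn ℝ 2 f S) (hg : ContDiffOn ℝ 2 g S) (c : ℝ) {t : ℝ} (ht : t ∈ S) :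
    deriv (deriv (fun s => f s - c * g s)) t
      = deriv (deriv f) t - c * deriv (deriv g) t := by
  have hfd : DifferentiableOn ℝ f S := hf.differentiableOn (by norm_num)
  have hgd : DifferentiableOn ℝ g S := hg.differentiableOn (by norm_num)
  have hf1 : ContDiffOn ℝ 1 (deriv f) S := hf.deriv_of_isOpen hS (by norm_num)
  have hg1 : ContDiffOn ℝ 1 (deriv g) S := hg.deriv_of_isOpen hS (by norm_num)
  have hfd' : DifferentiableOn ℝ (deriv f) S := hf1.differentiableOn one_ne_zero
  have hgd' : DifferentiableOn ℝ (deriv g) S := hg1.differentiableOn one_ne_zero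
  have h1 : ∀ s ∈ S, deriv (fun u => f u - c * g u) s = deriv f s - c * deriv g s := by
    intro s hs
    have h2 := hfd.differentiableAt (hS.mem_nhds hs)
    have h3 := hgd.differentiableAt (hS.mem_nhds hs)
    rw [deriv_fun_sub h2 (h3.const_mul c), deriv_const_mul c h3]
  have hev : deriv (fun u => f u - c * g u) =ᶠ[nhds t] fun s => deriv f s - c * deriv g s :=
    Filter.eventuallyEq_of_mem (hS.mem_nhds ht) h1
  have h4 := hfd'.differentiableAt (hS.mem_nhds ht)
  have h5 := hgd'.differentiableAt (hS.mem_nhds ht)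
  rw [hev.deriv_eq, deriv_fun_sub h4 (h5.const_mul c), deriv_const_mul c h5]

lemma jensen_nonneg {h : ℝ → ℝ} {a b : ℝ} (hab : a < b)
    (hc : ContinuousOn h (Icc a b))
    (hd : DifferentiableOn ℝ h (Ioo a b))
    (hd2 : DifferentiableOn ℝ (deriv h) (Ioo a b))
    (hpos : ∀ t ∈ Ioo a b, 0 ≤ deriv (deriv h) t) :
    0 ≤ h a + h b - 2 * h ((a + b) / 2) := by
  have hconv : ConvexOn ℝ (Icc a b) h := by
    apply convexOn_of_deriv2_nonneg (convex_Icc a b) hc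
    · rwa [interior_Icc]
    · rwa [interior_Icc]
    · intro x hx
      rw [interior_Icc] at hx
      simpa [Function.iterate_succ, Function.iterate_zero, Function.comp] using hpos x hx
  have H := hconv.2 (left_mem_Icc.mpr hab.le) (right_mem_Icc.mpr hab.le)
    (by norm_num : (0:ℝ) ≤ 1/2) (by norm_num : (0:ℝ) ≤ 1/2) (by norm_num)
  simp only [smul_eq_mul] at H
  have e : (1/2:ℝ) * a + (1/2:ℝ) * b = (a + b) / 2 := by ring
  rw [e] at H
  linarith

lemma jensen_pos {h : ℝ → ℝ} {a b : ℝ} (hab : a < b)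
    (hc : ContinuousOn h (Icc a b))
    (hpos : ∀ t ∈ Ioo a b, 0 < deriv (deriv h) t) :
    0 < h a + h b - 2 * h ((a + b) / 2) := by
  have hconv : StrictConvexOn ℝ (Icc a b) h := by
    apply strictConvexOn_of_deriv2_pos (convex_Icc a b) hc
    intro x hx
    rw [interior_Icc] at hx
    simpa [Function.iterate_succ, Function.iterate_zero, Function.comp] using hpos x hx
  have H := hconv.2 (left_mem_Icc.mpr hab.le) (right_mem_Icc.mpr hab.le) hab.ne
    (by norm_num : (0:ℝ) < 1/2) (by norm_num : (0:ℝ) < 1/2) (by norm_num)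
  simp only [smul_eq_mul] at H
  have e : (1/2:ℝ) * a + (1/2:ℝ) * b = (a + b) / 2 := by ring
  rw [e] at H
  linarith

/-- Jensen gap bound for `f - c*g` when its second derivative is nonnegative on `(a,b)`. -/
lemma jensen_sub_nonneg {f g : ℝ → ℝ} {I : Set ℝ} (hI : I.OrdConnected)
    (hf : ContDiffOn ℝ 2 f I) (hg : ContDiffOn ℝ 2 g I)
    {a b : ℝ} (ha : a ∈ I) (hb : b ∈ I) (hab : a < b) (c : ℝ)
    (hsign : ∀ t ∈ Ioo a b,
      0 ≤ deriv (deriv f) t - c * deriv (deriv g) t) :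
    0 ≤ (f a - c * g a) + (f b - c * g b) - 2 * (f ((a+b)/2) - c * g ((a+b)/2)) := by
  have hIcc : Icc a b ⊆ I := hI.out ha hb
  have hIoo : Ioo a b ⊆ interior I :=
    isOpen_Ioo.subset_interior_iff.mpr (Ioo_subset_Icc_self.trans hIcc)
  have hfS : ContDiffOn ℝ 2 f (interior I) := hf.mono interior_subset
  have hgS : ContDiffOn ℝ 2 g (interior I) := hg.mono interior_subset
  have hO : IsOpen (interior I) := isOpen_interior
  have hf1 : ContDiffOn ℝ 1 (deriv f) (interior I) := hfS.deriv_of_isOpen hO (by norm_num)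
  have hg1 : ContDiffOn ℝ 1 (deriv g) (interior I) := hgS.deriv_of_isOpen hO (by norm_num)
  have hcf : ContinuousOn f (Icc a b) := hf.continuousOn.mono hIcc
  have hcg : ContinuousOn g (Icc a b) := hg.continuousOn.mono hIcc
  have hd : DifferentiableOn ℝ (fun s => f s - c * g s) (Ioo a b) :=
    ((hfS.differentiableOn (by norm_num)).mono hIoo).sub
      (((hgS.differentiableOn (by norm_num)).mono hIoo).const_mul c)
  have hd2 : DifferentiableOn ℝ (deriv (fun s => f s - c * g s)) (Ioo a b) := by
    apply DifferentiableOn.congr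
      (f := fun s => deriv f s - c * deriv g s)
      (((hf1.differentiableOn one_ne_zero).mono hIoo).sub
        (((hg1.differentiableOn one_ne_zero).mono hIoo).const_mul c))
    intro s hs
    have h2 := (hfS.differentiableOn (by norm_num)).differentiableAt (hO.mem_nhds (hIoo hs))
    have h3 := (hgS.differentiableOn (by norm_num)).differentiableAt (hO.mem_nhds (hIoo hs))
    rw [deriv_fun_sub h2 (h3.const_mul c), deriv_const_mul c h3]
  have H := jensen_nonneg (h := fun s => f s - c * g s) hab
    (hcf.sub (continuousOn_const.mul hcg)) hd hd2 ?_
  · linarith [H]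
  · intro t ht
    rw [deriv2_sub_const_mul hO hfS hgS c (hIoo ht)]
    exact hsign t ht

theorem stmt0 (I : Set ℝ) (hI : I.OrdConnected) (f g : ℝ → ℝ)
    (hf : ContDiffOn ℝ 2 f I) (hg : ContDiffOn ℝ 2 g I)
    (hg'' : ∀ t ∈ I, 0 < deriv (deriv g) t)
    (hfg : ∀ t ∈ I, deriv (deriv f) t = t * deriv (deriv g) t) :
    ∀ a ∈ I, ∀ b ∈ I, a ≠ b →
      min a b ≤ (f a + f b - 2 * f ((a + b) / 2)) / (g a + g b - 2 * g ((a + b) / 2)) ∧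
      (f a + f b - 2 * f ((a + b) / 2)) / (g a + g b - 2 * g ((a + b) / 2)) ≤ max a b := by
  have key : ∀ a ∈ I, ∀ b ∈ I, a < b →
      a * (g a + g b - 2 * g ((a + b) / 2)) ≤ f a + f b - 2 * f ((a + b) / 2) ∧
      f a + f b - 2 * f ((a + b) / 2) ≤ b * (g a + g b - 2 * g ((a + b) / 2)) ∧
      0 < g a + g b - 2 * g ((a + b) / 2) := by
    intro a ha b hb hab
    have hIcc : Icc a b ⊆ I := hI.out ha hb
    have hImem : Ioo a b ⊆ I := Ioo_subset_Icc_self.trans hIcc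
    have hJg : 0 < g a + g b - 2 * g ((a + b) / 2) := by
      apply jensen_pos hab (hg.continuousOn.mono hIcc)
      intro t ht
      exact hg'' t (hImem ht)
    have hlow := jensen_sub_nonneg hI hf hg ha hb hab a (by
      intro t ht
      rw [hfg t (hImem ht)]
      nlinarith [hg'' t (hImem ht), ht.1.le])
    have hup := jensen_sub_nonneg hI (f := fun s => -f s) (g := fun s => -g s)
      (hf.neg) (hg.neg) ha hb hab b ?_
    · refine ⟨by nlinarith [hlow], ?_, hJg⟩
      have e1 : deriv (fun s => -f s) = fun s => -deriv f s := funext fun s => deriv.fun_neg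
      nlinarith [hup]
    · intro t ht
      have e1 : deriv (deriv (fun s => -f s)) t = -deriv (deriv f) t := by
        rw [show deriv (fun s => -f s) = fun s => -deriv f s from funext fun s => deriv.fun_neg]
        exact deriv.fun_neg
      have e2 : deriv (deriv (fun s => -g s)) t = -deriv (deriv g) t := by
        rw [show deriv (fun s => -g s) = fun s => -deriv g s from funext fun s => deriv.fun_neg]
        exact deriv.fun_neg
      rw [e1, e2, hfg t (hImem ht)]
      nlinarith [hg'' t (hImem ht), ht.2.le]
  intro a ha b hb hab
  rcases hab.lt_or_gt with h | h
  · obtain ⟨h1, h2, h3⟩ := key a ha b hb h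
    rw [min_eq_left h.le, max_eq_right h.le]
    exact ⟨(le_div_iff₀ h3).mpr (by linarith), (div_le_iff₀ h3).mpr (by linarith)⟩
  · obtain ⟨h1, h2, h3⟩ := key b hb a ha h
    rw [min_eq_right h.le, max_eq_left h.le]
    rw [show a + b = b + a from add_comm a b]
    constructor
    · rw [le_div_iff₀ (by linarith)]; linarith
    · rw [div_le_iff₀ (by linarith)]; linarith
end

section
/- Let f, g : I → ℝ be twice continuously differentiable with g'' > 0 and f''(t) = t·g''(t) on I. Then for any n ≥ 2, any positive weights p₁,…,pₙ summing to 1, and any x₁,…,xₙ ∈ I, the quotient (∑ pᵢ f(xᵢ) - f(∑ pᵢ xᵢ)) / (∑ pᵢ g(xᵢ) - g(∑ pᵢ xᵢ)) lies between min{x₁,…,xₙ} and max{x₁,…,xₙ}, provided not all xᵢ are equal. -/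
open Set

/-- Auxiliary convexity lemma: `ε • (f - c • g)` is convex on `J ⊆ I` when
`ε * (t - c) ≥ 0` on the interior of `J`. -/
lemma aux_convex {I : Set ℝ} {f g : ℝ → ℝ}
    (hf : ContDiffOn ℝ 2 f I) (hg : ContDiffOn ℝ 2 g I)
    (hg'' : ∀ t ∈ I, 0 < deriv (deriv g) t)
    (hfg : ∀ t ∈ I, deriv (deriv f) t = t * deriv (deriv g) t)
    {J : Set ℝ} (hJ : Convex ℝ J) (hJI : J ⊆ I) (ε c : ℝ)
    (hc : ∀ t ∈ interior J, 0 ≤ ε * (t - c)) :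
    ConvexOn ℝ J (fun t => ε * (f t - c * g t)) := by
  set U : Set ℝ := interior I with hU
  have hUopen : IsOpen U := isOpen_interior
  have hJU : interior J ⊆ U := interior_mono hJI
  have hfU : ContDiffOn ℝ 2 f U := hf.mono interior_subset
  have hgU : ContDiffOn ℝ 2 g U := hg.mono interior_subset
  have hfd : DifferentiableOn ℝ f U := hfU.differentiableOn (by norm_num)
  have hgd : DifferentiableOn ℝ g U := hgU.differentiableOn (by norm_num)
  have hfd' : DifferentiableOn ℝ (deriv f) U :=
    (hfU.deriv_of_isOpen (m := 1) hUopen (by norm_num)).differentiableOn (by norm_num)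
  have hgd' : DifferentiableOn ℝ (deriv g) U :=
    (hgU.deriv_of_isOpen (m := 1) hUopen (by norm_num)).differentiableOn (by norm_num)
  have hfdAt : ∀ t ∈ U, DifferentiableAt ℝ f t := fun t ht =>
    hfd.differentiableAt (hUopen.mem_nhds ht)
  have hgdAt : ∀ t ∈ U, DifferentiableAt ℝ g t := fun t ht =>
    hgd.differentiableAt (hUopen.mem_nhds ht)
  have hfdAt' : ∀ t ∈ U, DifferentiableAt ℝ (deriv f) t := fun t ht =>
    hfd'.differentiableAt (hUopen.mem_nhds ht)
  have hgdAt' : ∀ t ∈ U, DifferentiableAt ℝ (deriv g) t := fun t ht =>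
    hgd'.differentiableAt (hUopen.mem_nhds ht)
  set φ : ℝ → ℝ := fun t => ε * (f t - c * g t) with hφ
  set ψ : ℝ → ℝ := fun t => ε * (deriv f t - c * deriv g t) with hψ
  have hφcont : ContinuousOn φ J :=
    (((hf.continuousOn.mono hJI).sub
      ((hg.continuousOn.mono hJI).const_smul c)).const_smul ε)
  have hφdU : ∀ t ∈ U, DifferentiableAt ℝ φ t := fun t ht =>
    (((hfdAt t ht).sub ((hgdAt t ht).const_mul c)).const_mul ε)
  have hψdU : ∀ t ∈ U, DifferentiableAt ℝ ψ t := fun t ht =>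
    (((hfdAt' t ht).sub ((hgdAt' t ht).const_mul c)).const_mul ε)
  have hderφ : ∀ t ∈ U, deriv φ t = ψ t := by
    intro t ht
    rw [hφ, hψ]
    rw [deriv_const_mul (d := fun y => f y - c * g y) _ ((hfdAt t ht).sub ((hgdAt t ht).const_mul c)),
      deriv_fun_sub (hfdAt t ht) ((hgdAt t ht).const_mul c),
      deriv_const_mul _ (hgdAt t ht)]
  have hderφ' : ∀ t ∈ U, deriv (deriv φ) t = deriv ψ t := by
    intro t ht
    apply Filter.EventuallyEq.deriv_eq
    filter_upwards [hUopen.mem_nhds ht] with s hs using hderφ s hs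
  have hderψ : ∀ t ∈ U, deriv ψ t = ε * (t - c) * deriv (deriv g) t := by
    intro t ht
    have htI : t ∈ I := interior_subset ht
    rw [hψ]
    rw [deriv_const_mul (d := fun y => deriv f y - c * deriv g y) _ ((hfdAt' t ht).sub ((hgdAt' t ht).const_mul c)),
      deriv_fun_sub (hfdAt' t ht) ((hgdAt' t ht).const_mul c),
      deriv_const_mul _ (hgdAt' t ht), hfg t htI]
    ring
  apply convexOn_of_deriv2_nonneg hJ hφcont
  · exact fun t ht => (hφdU t (hJU ht)).differentiableWithinAt
  · intro t ht
    refine ((hψdU t (hJU ht)).differentiableWithinAt).congr ?_ (hderφ t (hJU ht))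
    exact fun s hs => hderφ s (hJU hs)
  · intro t ht
    have htU : t ∈ U := hJU ht
    have : deriv^[2] φ t = deriv (deriv φ) t := by
      simp [Function.iterate_succ, Function.iterate_one]
    rw [this, hderφ' t htU, hderψ t htU]
    exact mul_nonneg (hc t ht) (hg'' t (interior_subset htU)).le

theorem stmt2 (I : Set ℝ) (hI : I.OrdConnected) (f g : ℝ → ℝ)
    (hf : ContDiffOn ℝ 2 f I) (hg : ContDiffOn ℝ 2 g I)
    (hg'' : ∀ t ∈ I, 0 < deriv (deriv g) t)
    (hfg : ∀ t ∈ I, deriv (deriv f) t = t * deriv (deriv g) t)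
    (n : ℕ) (hn : 2 ≤ n) (p : Fin n → ℝ) (hp : ∀ i, 0 < p i)
    (hp1 : ∑ i, p i = 1) (x : Fin n → ℝ) (hx : ∀ i, x i ∈ I)
    (hne : ¬ ∀ i j, x i = x j) :
    sInf (Set.range x) ≤
      (∑ i, p i * f (x i) - f (∑ i, p i * x i)) /
        (∑ i, p i * g (x i) - g (∑ i, p i * x i)) ∧
    (∑ i, p i * f (x i) - f (∑ i, p i * x i)) /
        (∑ i, p i * g (x i) - g (∑ i, p i * x i)) ≤ sSup (Set.range x) := by
  push_neg at hne
  obtain ⟨i₀, j₀, hij⟩ := hne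
  set m := sInf (Set.range x) with hm
  set M := sSup (Set.range x) with hM
  have hfin : (Set.range x).Finite := Set.finite_range x
  have hmle : ∀ i, m ≤ x i := fun i => csInf_le hfin.bddBelow ⟨i, rfl⟩
  have hleM : ∀ i, x i ≤ M := fun i => le_csSup hfin.bddAbove ⟨i, rfl⟩
  set J : Set ℝ := I ∩ Set.Icc m M with hJ
  have hJI : J ⊆ I := Set.inter_subset_left
  have hIconv : Convex ℝ I := hI.convex
  have hJconv : Convex ℝ J := hIconv.inter (convex_Icc m M)
  have hxJ : ∀ i, x i ∈ J := fun i => ⟨hx i, hmle i, hleM i⟩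
  have hcJ : (∑ i, p i * x i) ∈ J := by
    have := hJconv.sum_mem (t := Finset.univ) (fun i _ => (hp i).le)
      hp1 (fun i _ => hxJ i)
    simpa [smul_eq_mul] using this
  -- strict convexity of g on J
  have hgsc : StrictConvexOn ℝ J g := by
    apply strictConvexOn_of_deriv2_pos hJconv (hg.continuousOn.mono hJI)
    intro t ht
    have : deriv^[2] g t = deriv (deriv g) t := by
      simp [Function.iterate_succ, Function.iterate_one]
    rw [this]
    exact hg'' t (hJI (interior_subset ht))
  set A := ∑ i, p i * f (x i) - f (∑ i, p i * x i) with hA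
  set B := ∑ i, p i * g (x i) - g (∑ i, p i * x i) with hB
  have hBpos : 0 < B := by
    have := hgsc.map_sum_lt (t := Finset.univ) (fun i _ => hp i) hp1
      (fun i _ => hxJ i) ⟨i₀, Finset.mem_univ _, j₀, Finset.mem_univ _, hij⟩
    simp only [smul_eq_mul] at this
    rw [hB]
    linarith
  have hlower : m * B ≤ A := by
    have hconv := aux_convex hf hg hg'' hfg hJconv hJI 1 m
      (fun t ht => by
        have : m ≤ t := ((interior_subset ht : t ∈ J).2).1
        linarith)
    have := hconv.map_sum_le (t := Finset.univ) (fun i _ => (hp i).le) hp1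
      (fun i _ => hxJ i)
    simp only [smul_eq_mul, one_mul] at this
    have hsum : ∑ i, p i * (f (x i) - m * g (x i))
        = ∑ i, p i * f (x i) - m * ∑ i, p i * g (x i) := by
      rw [Finset.mul_sum, ← Finset.sum_sub_distrib]
      exact Finset.sum_congr rfl fun i _ => by ring
    rw [hsum] at this
    rw [hA, hB]
    nlinarith [this]
  have hupper : A ≤ M * B := by
    have hconv := aux_convex hf hg hg'' hfg hJconv hJI (-1) M
      (fun t ht => by
        have : t ≤ M := ((interior_subset ht : t ∈ J).2).2
        nlinarith)
    have := hconv.map_sum_le (t := Finset.univ) (fun i _ => (hp i).le) hp1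
      (fun i _ => hxJ i)
    simp only [smul_eq_mul] at this
    have hsum : ∑ i, p i * (-1 * (f (x i) - M * g (x i)))
        = -(∑ i, p i * f (x i)) + M * ∑ i, p i * g (x i) := by
      rw [Finset.mul_sum, ← Finset.sum_neg_distrib, ← Finset.sum_add_distrib]
      exact Finset.sum_congr rfl fun i _ => by ring
    rw [hsum] at this
    rw [hA, hB]
    nlinarith [this]
  constructor
  · rw [le_div_iff₀ hBpos]; linarith
  · rw [div_le_iff₀ hBpos]; linarith
end

section
/- For any positive weights p₁,…,pₙ summing to 1 and any real numbers x₁,…,xₙ not all equal, min{xᵢ} ≤ (∑ pᵢ xᵢ³ - (∑ pᵢ xᵢ)³) / (3(∑ pᵢ xᵢ² - (∑ pᵢ xᵢ)²)) ≤ max{xᵢ}. -/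
theorem stmt4 (n : ℕ) (p x : Fin n → ℝ) (hp : ∀ i, 0 < p i) (hp1 : ∑ i, p i = 1)
    (hne : ¬ ∀ i j, x i = x j) :
    sInf (Set.range x) ≤
      (∑ i, p i * (x i) ^ 3 - (∑ i, p i * x i) ^ 3) /
        (3 * (∑ i, p i * (x i) ^ 2 - (∑ i, p i * x i) ^ 2)) ∧
    (∑ i, p i * (x i) ^ 3 - (∑ i, p i * x i) ^ 3) /
        (3 * (∑ i, p i * (x i) ^ 2 - (∑ i, p i * x i) ^ 2)) ≤ sSup (Set.range x) := by
  push_neg at hne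
  obtain ⟨i0, j0, hij⟩ := hne
  haveI : Nonempty (Fin n) := ⟨i0⟩
  set μ := ∑ i, p i * x i with hμ
  set m := sInf (Set.range x) with hmdef
  set M := sSup (Set.range x) with hMdef
  have hm : ∀ i, m ≤ x i := fun i =>
    csInf_le (Set.finite_range x).bddBelow ⟨i, rfl⟩
  have hM : ∀ i, x i ≤ M := fun i =>
    le_csSup (Set.finite_range x).bddAbove ⟨i, rfl⟩
  have hμM : μ ≤ M := by
    calc μ ≤ ∑ i, p i * M := Finset.sum_le_sum fun i _ =>
            mul_le_mul_of_nonneg_left (hM i) (hp i).le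
    _ = M := by rw [← Finset.sum_mul, hp1, one_mul]
  have hmμ : m ≤ μ := by
    calc (m : ℝ) = ∑ i, p i * m := by rw [← Finset.sum_mul, hp1, one_mul]
    _ ≤ μ := Finset.sum_le_sum fun i _ => mul_le_mul_of_nonneg_left (hm i) (hp i).le
  set A := ∑ i, p i * (x i - μ) ^ 2 with hA
  set B := ∑ i, p i * (x i - μ) ^ 3 with hB
  have h2 : ∑ i, p i * (x i) ^ 2 - μ ^ 2 = A := by
    have e : ∀ i ∈ Finset.univ, p i * (x i - μ) ^ 2
        = p i * (x i) ^ 2 - 2 * μ * (p i * x i) + μ ^ 2 * p i := fun i _ => by ring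
    rw [hA, Finset.sum_congr rfl e, Finset.sum_add_distrib, Finset.sum_sub_distrib,
      ← Finset.mul_sum, ← Finset.mul_sum, ← hμ, hp1]
    ring
  have h3 : ∑ i, p i * (x i) ^ 3 - μ ^ 3 = B + 3 * μ * A := by
    have e : ∀ i ∈ Finset.univ, p i * (x i - μ) ^ 3 + 3 * μ * (p i * (x i - μ) ^ 2)
        = p i * (x i) ^ 3 - 3 * μ ^ 2 * (p i * x i) + 2 * μ ^ 3 * p i := fun i _ => by ring
    have : B + 3 * μ * A
        = ∑ i, (p i * (x i) ^ 3 - 3 * μ ^ 2 * (p i * x i) + 2 * μ ^ 3 * p i) := by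
      rw [hB, hA, Finset.mul_sum, ← Finset.sum_add_distrib]
      exact Finset.sum_congr rfl e
    rw [this, Finset.sum_add_distrib, Finset.sum_sub_distrib,
      ← Finset.mul_sum, ← Finset.mul_sum, ← hμ, hp1]
    ring
  -- A > 0
  obtain ⟨k, hk⟩ : ∃ k, x k ≠ μ := by
    by_contra h
    push_neg at h
    exact hij ((h i0).trans (h j0).symm)
  have hApos : 0 < A := by
    apply Finset.sum_pos' (fun i _ => mul_nonneg (hp i).le (sq_nonneg _))
    refine ⟨k, Finset.mem_univ k, mul_pos (hp k) ?_⟩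
    have : x k - μ ≠ 0 := sub_ne_zero.mpr hk
    positivity
  have hBM : B ≤ (M - μ) * A := by
    rw [hB, hA, Finset.mul_sum]
    refine Finset.sum_le_sum fun i _ => ?_
    have h1 : (x i - μ) ^ 3 ≤ (M - μ) * (x i - μ) ^ 2 := by
      have := hM i
      nlinarith [sq_nonneg (x i - μ)]
    calc p i * (x i - μ) ^ 3 ≤ p i * ((M - μ) * (x i - μ) ^ 2) :=
          mul_le_mul_of_nonneg_left h1 (hp i).le
    _ = (M - μ) * (p i * (x i - μ) ^ 2) := by ring
  have hBm : (m - μ) * A ≤ B := by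
    rw [hB, hA, Finset.mul_sum]
    refine Finset.sum_le_sum fun i _ => ?_
    have h1 : (m - μ) * (x i - μ) ^ 2 ≤ (x i - μ) ^ 3 := by
      have := hm i
      nlinarith [sq_nonneg (x i - μ)]
    calc (m - μ) * (p i * (x i - μ) ^ 2) = p i * ((m - μ) * (x i - μ) ^ 2) := by ring
    _ ≤ p i * (x i - μ) ^ 3 := mul_le_mul_of_nonneg_left h1 (hp i).le
  rw [h2, h3]
  have h3A : 0 < 3 * A := by linarith
  constructor
  · rw [le_div_iff₀ h3A]
    nlinarith [mul_nonneg (sub_nonneg.mpr hmμ) hApos.le]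
  · rw [div_le_iff₀ h3A]
    nlinarith [mul_nonneg (sub_nonneg.mpr hμM) hApos.le]
end

section
/- For a real random variable X with finite support contained in [m, M] (or bounded with min and max attained), (EX)³ + 3m·Var(X) ≤ E(X³) ≤ (EX)³ + 3M·Var(X). -/
open MeasureTheory in
theorem cube_lower_aux {Ω : Type*} [MeasurableSpace Ω] (μ : Measure Ω)
    [IsProbabilityMeasure μ] (X : Ω → ℝ) (c : ℝ)
    (i1 : Integrable X μ) (i2 : Integrable (fun ω => (X ω)^2) μ)
    (i3 : Integrable (fun ω => (X ω)^3) μ)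
    (h : ∀ᵐ ω ∂μ, c ≤ X ω) :
    (∫ ω, X ω ∂μ) ^ 3 + 3 * c * ((∫ ω, (X ω) ^ 2 ∂μ) - (∫ ω, X ω ∂μ) ^ 2) ≤
      ∫ ω, (X ω) ^ 3 ∂μ := by
  set a := ∫ ω, X ω ∂μ with ha
  have hca : c ≤ a := by
    have := integral_mono_ae (integrable_const c) i1 h
    simpa using this
  have key : ∀ᵐ ω ∂μ,
      (3*c) * (X ω)^2 + ((3*a^2 - 6*c*a) * X ω + (3*c*a^2 - 2*a^3)) ≤ (X ω)^3 := by
    filter_upwards [h] with ω hω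
    nlinarith [sq_nonneg (X ω - a),
      mul_nonneg (sq_nonneg (X ω - a)) (by linarith : (0:ℝ) ≤ X ω + 2*a - 3*c)]
  have ig2 : Integrable (fun ω => (3*a^2 - 6*c*a) * X ω + (3*c*a^2 - 2*a^3)) μ :=
    (i1.const_mul _).add (integrable_const _)
  have ig : Integrable
      (fun ω => (3*c) * (X ω)^2 + ((3*a^2 - 6*c*a) * X ω + (3*c*a^2 - 2*a^3))) μ :=
    (i2.const_mul _).add ig2
  have hint := integral_mono_ae ig i3 key
  rw [integral_add (i2.const_mul _) ig2,
      integral_add (i1.const_mul _) (integrable_const _),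
      integral_const_mul, integral_const_mul, integral_const] at hint
  simp only [measure_univ, probReal_univ, ENNReal.toReal_one, smul_eq_mul, one_mul] at hint
  linarith

open MeasureTheory in
theorem stmt5 {Ω : Type*} [MeasurableSpace Ω] (μ : Measure Ω)
    [IsProbabilityMeasure μ] (X : Ω → ℝ) (m M : ℝ) (hX : Measurable X)
    (hb : ∀ᵐ ω ∂μ, X ω ∈ Set.Icc m M) :
    (∫ ω, X ω ∂μ) ^ 3 + 3 * m * ((∫ ω, (X ω) ^ 2 ∂μ) - (∫ ω, X ω ∂μ) ^ 2) ≤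
        ∫ ω, (X ω) ^ 3 ∂μ ∧
    (∫ ω, (X ω) ^ 3 ∂μ) ≤
      (∫ ω, X ω ∂μ) ^ 3 + 3 * M * ((∫ ω, (X ω) ^ 2 ∂μ) - (∫ ω, X ω ∂μ) ^ 2) := by
  set C := max |m| |M| with hCdef
  have hbC : ∀ᵐ ω ∂μ, ‖X ω‖ ≤ C := by
    filter_upwards [hb] with ω h
    exact abs_le_max_abs_abs h.1 h.2
  have i1 : Integrable X μ :=
    (MemLp.of_bound hX.aestronglyMeasurable C hbC).integrable le_rfl
  have i2 : Integrable (fun ω => (X ω)^2) μ :=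
    (MemLp.of_bound ((hX.pow_const 2).aestronglyMeasurable) (C^2) (by
      filter_upwards [hbC] with ω h
      calc ‖(X ω)^2‖ = ‖X ω‖^2 := by rw [norm_pow]
        _ ≤ C^2 := pow_le_pow_left₀ (norm_nonneg _) h 2)).integrable le_rfl
  have i3 : Integrable (fun ω => (X ω)^3) μ :=
    (MemLp.of_bound ((hX.pow_const 3).aestronglyMeasurable) (C^3) (by
      filter_upwards [hbC] with ω h
      calc ‖(X ω)^3‖ = ‖X ω‖^3 := by rw [norm_pow]
        _ ≤ C^3 := pow_le_pow_left₀ (norm_nonneg _) h 3)).integrable le_rfl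
  constructor
  · exact cube_lower_aux μ X m i1 i2 i3 (hb.mono fun ω h => h.1)
  · have h2 : (fun ω => (-X ω)^2) = fun ω => (X ω)^2 := by funext ω; ring
    have h3 : (fun ω => (-X ω)^3) = fun ω => -(X ω)^3 := by funext ω; ring
    have i2' : Integrable (fun ω => (-X ω)^2) μ := by rw [h2]; exact i2
    have i3' : Integrable (fun ω => (-X ω)^3) μ := by rw [h3]; exact i3.neg
    have h' : ∀ᵐ ω ∂μ, -M ≤ -X ω := hb.mono fun ω h => neg_le_neg h.2
    have key := cube_lower_aux μ (fun ω => -X ω) (-M) i1.neg i2' i3' h'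
    have ea : ∫ ω, -X ω ∂μ = -∫ ω, X ω ∂μ := integral_neg X
    beta_reduce at key
    have e2 : ∫ ω, (-X ω)^2 ∂μ = ∫ ω, (X ω)^2 ∂μ := by rw [h2]
    have e3 : ∫ ω, (-X ω)^3 ∂μ = -∫ ω, (X ω)^3 ∂μ := by
      rw [show (fun ω => (-X ω)^3) = fun ω => -(X ω)^3 from h3]; exact integral_neg _
    rw [ea, e2, e3] at key
    nlinarith [key]
end

section
/- For any positive sequence x = (x₁,…,xₙ), positive weights p summing to 1, and real numbers s ∈ ℝ, r > 0, the inequality χ_s(p,x)·χ_{s+r+1}(p,x) ≥ χ_{s+1}(p,x)·χ_{s+r}(p,x) holds, where χ_s(p,x) = (∑pᵢxᵢ^s - (∑pᵢxᵢ)^s)/(s(s-1)) for s ∉ {0,1}, χ_0(p,x) = log(∑pᵢxᵢ) - ∑pᵢ log xᵢ, and χ_1(p,x) = ∑pᵢxᵢ log xᵢ - (∑pᵢxᵢ) log(∑pᵢxᵢ). -/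
open MeasureTheory Real Set

noncomputable def chi (n : ℕ) (p x : Fin n → ℝ) (s : ℝ) : ℝ :=
  if s = 0 then Real.log (∑ i, p i * x i) - ∑ i, p i * Real.log (x i)
  else if s = 1 then
    (∑ i, p i * x i * Real.log (x i)) - (∑ i, p i * x i) * Real.log (∑ i, p i * x i)
  else ((∑ i, p i * (x i) ^ s) - (∑ i, p i * x i) ^ s) / (s * (s - 1))

lemma rpow_contOn (a b t : ℝ) (ha : 0 < a) (hb : 0 < b) :
    ContinuousOn (fun v : ℝ => v ^ t) (uIcc a b) := by
  apply ContinuousOn.rpow_const continuousOn_id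
  intro v hv
  exact Or.inl (lt_of_lt_of_le (lt_min ha hb) hv.1).ne'

lemma int_rpow (a b t : ℝ) (ha : 0 < a) (hb : 0 < b) (ht : t ≠ -1) :
    ∫ v in a..b, v ^ t = (b ^ (t + 1) - a ^ (t + 1)) / (t + 1) :=
  integral_rpow (Or.inr ⟨ht, notMem_uIcc_of_lt ha hb⟩)

lemma J_eq (a b : ℝ) (ha : 0 < a) (hb : 0 < b) (s : ℝ) :
    ∫ v in a..b, (b - v) * v ^ (s - 2) =
      if s = 0 then b * a⁻¹ - 1 - (Real.log b - Real.log a)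
      else if s = 1 then b * (Real.log b - Real.log a) - (b - a)
      else (b ^ s - b * a ^ (s - 1)) / (s - 1) - (b ^ s - a ^ s) / s := by
  have hne : ∀ v ∈ uIcc a b, v ≠ 0 := fun v hv =>
    (lt_of_lt_of_le (lt_min ha hb) hv.1).ne'
  have hEq : EqOn (fun v : ℝ => (b - v) * v ^ (s - 2))
      (fun v : ℝ => b * v ^ (s - 2) - v ^ (s - 1)) (uIcc a b) := by
    intro v hv
    have h1 : v ^ (s - 1) = v ^ (s - 2) * v := by
      rw [show s - 1 = (s - 2) + 1 by ring, Real.rpow_add_one (hne v hv)]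
    simp only [h1]; ring
  have hi1 : IntervalIntegrable (fun v : ℝ => b * v ^ (s - 2)) volume a b :=
    (continuousOn_const.mul (rpow_contOn a b _ ha hb)).intervalIntegrable
  have hi2 : IntervalIntegrable (fun v : ℝ => v ^ (s - 1)) volume a b :=
    (rpow_contOn a b _ ha hb).intervalIntegrable
  rw [intervalIntegral.integral_congr hEq, intervalIntegral.integral_sub hi1 hi2,
    intervalIntegral.integral_const_mul]
  by_cases h0 : s = 0
  · subst h0
    simp only [if_pos rfl, eq_self_iff_true, if_true]
    have e1 : ∫ v in a..b, v ^ ((0:ℝ) - 2) = (b ^ (-1:ℝ) - a ^ (-1:ℝ)) / (-1) := by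
      rw [int_rpow a b _ ha hb (by norm_num)]; norm_num
    have e2 : ∫ v in a..b, v ^ ((0:ℝ) - 1) = Real.log b - Real.log a := by
      have : EqOn (fun v : ℝ => v ^ ((0:ℝ) - 1)) (fun v : ℝ => v⁻¹) (uIcc a b) := by
        intro v hv; simp [show (0:ℝ) - 1 = -1 by ring, Real.rpow_neg_one]
      rw [intervalIntegral.integral_congr this,
        integral_inv (notMem_uIcc_of_lt ha hb), Real.log_div hb.ne' ha.ne']
    rw [e1, e2, Real.rpow_neg_one, Real.rpow_neg_one]
    field_simp
    ring
  by_cases h1 : s = 1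
  · subst h1
    simp only [if_neg one_ne_zero, if_pos rfl]
    have e1 : ∫ v in a..b, v ^ ((1:ℝ) - 2) = Real.log b - Real.log a := by
      have : EqOn (fun v : ℝ => v ^ ((1:ℝ) - 2)) (fun v : ℝ => v⁻¹) (uIcc a b) := by
        intro v hv; simp [show (1:ℝ) - 2 = -1 by ring, Real.rpow_neg_one]
      rw [intervalIntegral.integral_congr this,
        integral_inv (notMem_uIcc_of_lt ha hb), Real.log_div hb.ne' ha.ne']
    have e2 : ∫ v in a..b, v ^ ((1:ℝ) - 1) = b - a := by
      rw [int_rpow a b _ ha hb (by norm_num)]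
      norm_num
    rw [e1, e2]
    norm_num
  · simp only [if_neg h0, if_neg h1]
    have e1 : ∫ v in a..b, v ^ (s - 2) = (b ^ (s - 1) - a ^ (s - 1)) / (s - 1) := by
      rw [int_rpow a b _ ha hb (by intro h; apply h1; linarith [h])]
      rw [show s - 2 + 1 = s - 1 by ring]
    have e2 : ∫ v in a..b, v ^ (s - 1) = (b ^ s - a ^ s) / s := by
      rw [int_rpow a b _ ha hb (by intro h; apply h0; linarith [h])]
      norm_num
    rw [e1, e2]
    have hbs : b * b ^ (s - 1) = b ^ s := by
      rw [mul_comm, ← Real.rpow_add_one hb.ne' (s - 1)]; norm_num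
    have e3 : b * ((b ^ (s - 1) - a ^ (s - 1)) / (s - 1))
        = (b * b ^ (s - 1) - b * a ^ (s - 1)) / (s - 1) := by ring
    rw [e3, hbs]

lemma chi_eq_sum (n : ℕ) (p x : Fin n → ℝ) (hp : ∀ i, 0 < p i) (hp1 : ∑ i, p i = 1)
    (hx : ∀ i, 0 < x i) (hm : 0 < ∑ i, p i * x i) (s : ℝ) :
    chi n p x s = ∑ i, p i * ∫ v in (∑ j, p j * x j)..(x i), (x i - v) * v ^ (s - 2) := by
  set m := ∑ j, p j * x j with hmdef
  have hm' : 0 < m := hm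
  have hrw : ∀ i : Fin n, (p i * ∫ v in m..(x i), (x i - v) * v ^ (s - 2)) =
      p i * (if s = 0 then x i * m⁻¹ - 1 - (Real.log (x i) - Real.log m)
        else if s = 1 then x i * (Real.log (x i) - Real.log m) - (x i - m)
        else ((x i) ^ s - x i * m ^ (s - 1)) / (s - 1) - ((x i) ^ s - m ^ s) / s) := by
    intro i
    rw [J_eq m (x i) hm' (hx i) s]
  rw [Finset.sum_congr rfl fun i _ => hrw i]
  unfold chi
  by_cases h0 : s = 0
  · subst h0
    simp only [eq_self_iff_true, if_true]
    have e : ∀ i : Fin n, p i * (x i * m⁻¹ - 1 - (Real.log (x i) - Real.log m))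
        = p i * x i * m⁻¹ - p i - p i * Real.log (x i) + p i * Real.log m := fun i => by ring
    rw [Finset.sum_congr rfl fun i _ => e i]
    rw [Finset.sum_add_distrib, Finset.sum_sub_distrib, Finset.sum_sub_distrib,
      ← Finset.sum_mul, ← Finset.sum_mul, hp1, ← hmdef, mul_inv_cancel₀ hm'.ne']
    ring
  by_cases h1 : s = 1
  · subst h1
    simp only [if_neg one_ne_zero, eq_self_iff_true, if_true]
    have e : ∀ i : Fin n, p i * (x i * (Real.log (x i) - Real.log m) - (x i - m))
        = p i * x i * Real.log (x i) - p i * x i * Real.log m - p i * x i + p i * m := fun i => by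
      ring
    rw [Finset.sum_congr rfl fun i _ => e i]
    rw [Finset.sum_add_distrib, Finset.sum_sub_distrib, Finset.sum_sub_distrib,
      ← Finset.sum_mul, ← Finset.sum_mul, hp1, ← hmdef]
    ring
  · simp only [if_neg h0, if_neg h1]
    have hs : s ≠ 0 := h0
    have hs1 : s - 1 ≠ 0 := sub_ne_zero.mpr h1
    have e : ∀ i : Fin n, p i * (((x i) ^ s - x i * m ^ (s - 1)) / (s - 1) - ((x i) ^ s - m ^ s) / s)
        = (p i * (x i) ^ s) * (1 / (s - 1) - 1 / s) - (p i * x i) * (m ^ (s - 1) / (s - 1))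
          + p i * (m ^ s / s) := fun i => by field_simp; ring
    rw [Finset.sum_congr rfl fun i _ => e i]
    rw [Finset.sum_add_distrib, Finset.sum_sub_distrib,
      ← Finset.sum_mul, ← Finset.sum_mul, ← Finset.sum_mul, hp1, ← hmdef]
    have hms : m * m ^ (s - 1) = m ^ s := by
      rw [mul_comm, ← Real.rpow_add_one hm'.ne' (s - 1)]; norm_num
    rw [← hms]
    field_simp
    ring

-- indicator kernel
noncomputable def Kk (m b : ℝ) (v : ℝ) : ℝ :=
  (Ioc m b).indicator (fun v => b - v) v - (Ioc b m).indicator (fun v => b - v) v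

lemma Kk_nonneg (m b v : ℝ) : 0 ≤ Kk m b v := by
  unfold Kk
  simp only [indicator_apply, Set.mem_Ioc]
  split_ifs with h1 h2 h2
  · simp
  · simp only [sub_zero, sub_nonneg]; exact h1.2
  · simp only [zero_sub, neg_nonneg, sub_nonpos]; exact h2.1.le
  · simp

lemma Kk_zero (m b v : ℝ) (hm : 0 < m) (hb : 0 < b) (hv : v ≤ 0) : Kk m b v = 0 := by
  unfold Kk
  rw [indicator_of_notMem (by rw [Set.mem_Ioc]; intro h; linarith [h.1]),
    indicator_of_notMem (by rw [Set.mem_Ioc]; intro h; linarith [h.1]), sub_zero]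

lemma Kk_mul (m b t v : ℝ) : Kk m b v * v ^ t =
    (Ioc m b).indicator (fun v => (b - v) * v ^ t) v
      - (Ioc b m).indicator (fun v => (b - v) * v ^ t) v := by
  unfold Kk
  simp only [indicator_apply]
  split_ifs <;> ring

lemma ind_integrable (a b c t : ℝ) (ha : 0 < a) (hb : 0 < b) :
    Integrable ((Ioc a b).indicator (fun v => (c - v) * v ^ t)) volume := by
  apply IntegrableOn.integrable_indicator _ measurableSet_Ioc
  apply IntegrableOn.mono_set _ (Set.Ioc_subset_Icc_self.trans Set.Icc_subset_uIcc)
  apply ContinuousOn.integrableOn_compact isCompact_uIcc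
  exact (continuousOn_const.sub continuousOn_id).mul
    (ContinuousOn.rpow_const continuousOn_id
      (fun v hv => Or.inl (lt_of_lt_of_le (lt_min ha hb) hv.1).ne'))

lemma Kk_mul_integrable (m b t : ℝ) (hm : 0 < m) (hb : 0 < b) :
    Integrable (fun v => Kk m b v * v ^ t) volume := by
  simp only [Kk_mul]
  exact (ind_integrable m b b t hm hb).sub (ind_integrable b m b t hb hm)

lemma Kk_mul_integral (m b t : ℝ) (hm : 0 < m) (hb : 0 < b) :
    ∫ v, Kk m b v * v ^ t = ∫ v in m..b, (b - v) * v ^ t := by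
  simp only [Kk_mul]
  rw [integral_sub (ind_integrable m b b t hm hb) (ind_integrable b m b t hb hm),
    integral_indicator measurableSet_Ioc, integral_indicator measurableSet_Ioc]
  rfl

theorem stmt6 (n : ℕ) (p x : Fin n → ℝ) (hp : ∀ i, 0 < p i) (hp1 : ∑ i, p i = 1)
    (hx : ∀ i, 0 < x i) (s r : ℝ) (hr : 0 < r) :
    chi n p x (s + 1) * chi n p x (s + r) ≤ chi n p x s * chi n p x (s + r + 1) := by
  classical
  have hne : (Finset.univ : Finset (Fin n)).Nonempty := by
    by_contra h
    rw [Finset.not_nonempty_iff_eq_empty] at h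
    rw [h, Finset.sum_empty] at hp1
    norm_num at hp1
  have hm : 0 < ∑ i, p i * x i :=
    Finset.sum_pos (fun i _ => mul_pos (hp i) (hx i)) hne
  set m := ∑ j, p j * x j with hmdef
  set W : ℝ → ℝ := fun v => ∑ i, p i * Kk m (x i) v with hW
  -- W properties
  have hWnn : ∀ v, 0 ≤ W v := fun v =>
    Finset.sum_nonneg fun i _ => mul_nonneg (hp i).le (Kk_nonneg m (x i) v)
  have hWpos : ∀ v, W v ≠ 0 → 0 < v := by
    intro v h
    by_contra hv
    push_neg at hv
    apply h
    simp only [hW]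
    exact Finset.sum_eq_zero fun i _ => by rw [Kk_zero m (x i) v hm (hx i) hv, mul_zero]
  have hWint : ∀ t : ℝ, Integrable (fun v => W v * v ^ t) volume := by
    intro t
    have : (fun v => W v * v ^ t) = fun v => ∑ i, p i * (Kk m (x i) v * v ^ t) := by
      funext v
      simp only [hW, Finset.sum_mul, mul_assoc]
    rw [this]
    exact integrable_finset_sum _ fun i _ =>
      (Kk_mul_integrable m (x i) t hm (hx i)).const_mul (p i)
  have hchi : ∀ s' : ℝ, chi n p x s' = ∫ v, W v * v ^ (s' - 2) := by
    intro s'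
    rw [chi_eq_sum n p x hp hp1 hx hm s']
    have : (fun v => W v * v ^ (s' - 2))
        = fun v => ∑ i, p i * (Kk m (x i) v * v ^ (s' - 2)) := by
      funext v
      simp only [hW, Finset.sum_mul, mul_assoc]
    rw [this, integral_finset_sum _ fun i _ =>
      (Kk_mul_integrable m (x i) (s' - 2) hm (hx i)).const_mul (p i)]
    exact Finset.sum_congr rfl fun i _ => by
      rw [integral_const_mul, Kk_mul_integral m (x i) (s' - 2) hm (hx i)]
  set a := s - 2 with hadef
  set F : ℝ → ℝ → ℝ := fun t v => W v * v ^ t with hF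
  have hchiF : chi n p x s = ∫ v, F a v ∧ chi n p x (s + 1) = ∫ v, F (a + 1) v ∧
      chi n p x (s + r) = ∫ v, F (a + r) v ∧ chi n p x (s + r + 1) = ∫ v, F (a + r + 1) v := by
    refine ⟨hchi s, ?_, ?_, ?_⟩
    · rw [hchi (s + 1)]; simp only [show s + 1 - 2 = a + 1 by rw [hadef]; ring]; rfl
    · rw [hchi (s + r)]; simp only [show s + r - 2 = a + r by rw [hadef]; ring]; rfl
    · rw [hchi (s + r + 1)]; simp only [show s + r + 1 - 2 = a + r + 1 by rw [hadef]; ring]; rfl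
  obtain ⟨h1, h2, h3, h4⟩ := hchiF
  -- the double integral
  have claim2 : ∀ u v : ℝ,
      (W u * u ^ a) * (W v * v ^ a) * ((v - u) * (v ^ r - u ^ r))
        = F a u * F (a + r + 1) v - F (a + r) u * F (a + 1) v
          - F (a + 1) u * F (a + r) v + F (a + r + 1) u * F a v := by
    intro u v
    by_cases hu : W u = 0
    · simp [hF, hu]
    by_cases hv : W v = 0
    · simp [hF, hv]
    have hu' := hWpos u hu
    have hv' := hWpos v hv
    simp only [hF, Real.rpow_add hu', Real.rpow_add hv', Real.rpow_one]
    ring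
  have claim1 : ∀ u v : ℝ,
      0 ≤ (W u * u ^ a) * (W v * v ^ a) * ((v - u) * (v ^ r - u ^ r)) := by
    intro u v
    by_cases hu : W u = 0
    · simp [hu]
    by_cases hv : W v = 0
    · simp [hv]
    have hu' := hWpos u hu
    have hv' := hWpos v hv
    apply mul_nonneg (mul_nonneg (mul_nonneg (hWnn u) (Real.rpow_nonneg hu'.le a))
      (mul_nonneg (hWnn v) (Real.rpow_nonneg hv'.le a)))
    rcases le_total u v with h | h
    · exact mul_nonneg (by linarith) (by
        have := Real.rpow_le_rpow hu'.le h hr.le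
        linarith)
    · have hB := Real.rpow_le_rpow hv'.le h hr.le
      nlinarith
  have key : (0:ℝ) ≤ ∫ z : ℝ × ℝ,
      (F a z.1 * F (a + r + 1) z.2 - F (a + r) z.1 * F (a + 1) z.2
        - F (a + 1) z.1 * F (a + r) z.2 + F (a + r + 1) z.1 * F a z.2)
      ∂((volume : Measure ℝ).prod volume) := by
    apply integral_nonneg
    intro z
    have h := claim1 z.1 z.2
    rw [claim2 z.1 z.2] at h
    exact h
  have hFint : ∀ t, Integrable (F t) volume := fun t => hWint t
  have expand : (∫ z : ℝ × ℝ,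
      (F a z.1 * F (a + r + 1) z.2 - F (a + r) z.1 * F (a + 1) z.2
        - F (a + 1) z.1 * F (a + r) z.2 + F (a + r + 1) z.1 * F a z.2)
      ∂((volume : Measure ℝ).prod volume))
      = (∫ v, F a v) * (∫ v, F (a + r + 1) v) - (∫ v, F (a + r) v) * (∫ v, F (a + 1) v)
        - (∫ v, F (a + 1) v) * (∫ v, F (a + r) v) + (∫ v, F (a + r + 1) v) * (∫ v, F a v) := by
    have I1 : Integrable (fun z : ℝ × ℝ => F a z.1 * F (a + r + 1) z.2)
        ((volume : Measure ℝ).prod volume) := (hFint a).mul_prod (hFint (a + r + 1))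
    have I2 : Integrable (fun z : ℝ × ℝ => F (a + r) z.1 * F (a + 1) z.2)
        ((volume : Measure ℝ).prod volume) := (hFint (a + r)).mul_prod (hFint (a + 1))
    have I3 : Integrable (fun z : ℝ × ℝ => F (a + 1) z.1 * F (a + r) z.2)
        ((volume : Measure ℝ).prod volume) := (hFint (a + 1)).mul_prod (hFint (a + r))
    have I4 : Integrable (fun z : ℝ × ℝ => F (a + r + 1) z.1 * F a z.2)
        ((volume : Measure ℝ).prod volume) := (hFint (a + r + 1)).mul_prod (hFint a)
    rw [integral_add (by exact (I1.sub I2).sub I3) I4,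
      integral_sub (by exact I1.sub I2) I3,
      integral_sub I1 I2,
      integral_prod_mul, integral_prod_mul, integral_prod_mul, integral_prod_mul]
  rw [expand] at key
  rw [h1, h2, h3, h4]
  nlinarith [key]
end

section
/- For positive reals a ≠ b define λ_s(a,b) = ((s-1)/(s+1)) · (a^{s+1}+b^{s+1}-2((a+b)/2)^{s+1}) / (a^s+b^s-2((a+b)/2)^s) for s ∉ {-1,0,1}. Then λ_s(a,b) is monotone increasing as a function of s on ℝ \ {-1,0,1}. -/
noncomputable def lam (s a b : ℝ) : ℝ :=
  ((s - 1) / (s + 1)) *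
    (a ^ (s + 1) + b ^ (s + 1) - 2 * ((a + b) / 2) ^ (s + 1)) /
    (a ^ s + b ^ s - 2 * ((a + b) / 2) ^ s)

open MeasureTheory Set Real

/-- The moment integral `∫ x in a..b, min (x-a) (b-x) * x ^ t`. -/
noncomputable def II (a b t : ℝ) : ℝ := ∫ x in a..b, min (x - a) (b - x) * x ^ t

section aux
variable {a b : ℝ}

lemma cont_on2 (ha : 0 < a) (t : ℝ) :
    ContinuousOn (fun x : ℝ => x ^ t) (Ici a) := by
  intro x hx
  exact (Real.continuousAt_rpow_const x t
    (Or.inl (ne_of_gt (lt_of_lt_of_le ha hx)))).continuousWithinAt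

lemma cont_on (ha : 0 < a) (t : ℝ) :
    ContinuousOn (fun x : ℝ => min (x - a) (b - x) * x ^ t) (Ici a) :=
  (((continuous_id.sub continuous_const).min
    (continuous_const.sub continuous_id)).continuousOn).mul (cont_on2 ha t)

lemma integrable_aux (ha : 0 < a) {c d : ℝ} (hc : a ≤ c) (hd : a ≤ d) (t : ℝ) :
    IntervalIntegrable (fun x : ℝ => min (x - a) (b - x) * x ^ t) volume c d := by
  apply ((cont_on ha t).mono ?_).intervalIntegrable
  intro x hx
  rcases Set.mem_uIcc.mp hx with h | h
  · exact le_trans hc h.1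
  · exact le_trans hd h.1

lemma integrable_rpow_aux (ha : 0 < a) {c d : ℝ} (hc : a ≤ c) (hd : a ≤ d) (t : ℝ) :
    IntervalIntegrable (fun x : ℝ => x ^ t) volume c d := by
  apply ((cont_on2 ha t).mono ?_).intervalIntegrable
  intro x hx
  rcases Set.mem_uIcc.mp hx with h | h
  · exact le_trans hc h.1
  · exact le_trans hd h.1

lemma II_pos (ha : 0 < a) (hab : a < b) (t : ℝ) : 0 < II a b t := by
  apply intervalIntegral.intervalIntegral_pos_of_pos_on
    (integrable_aux ha le_rfl hab.le t) _ hab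
  intro x hx
  have hx0 : 0 < x := lt_trans ha hx.1
  exact mul_pos (lt_min (by linarith [hx.1]) (by linarith [hx.2])) (Real.rpow_pos_of_pos hx0 t)

lemma II_eq (ha : 0 < a) (hab : a < b) {t : ℝ} (h1 : t ≠ -1) (h2 : t ≠ -2) :
    II a b t = (a ^ (t + 2) + b ^ (t + 2) - 2 * ((a + b) / 2) ^ (t + 2)) / ((t + 1) * (t + 2)) := by
  set c : ℝ := (a + b) / 2 with hc
  have hac : a < c := by rw [hc]; linarith
  have hcb : c < b := by rw [hc]; linarith
  have hc0 : 0 < c := lt_trans ha hac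
  have ht1 : t + 1 ≠ 0 := by intro h; apply h1; linarith
  have ht2 : t + 2 ≠ 0 := by intro h; apply h2; linarith
  have hiac : ∀ r : ℝ, r ≠ -1 → ∫ x in a..c, (x:ℝ) ^ r = (c ^ (r+1) - a ^ (r+1)) / (r+1) := by
    intro r hr
    apply _root_.integral_rpow
    right
    refine ⟨hr, ?_⟩
    rw [Set.uIcc_of_le hac.le]
    intro h0
    exact absurd h0.1 (not_le.mpr ha)
  have hicb : ∀ r : ℝ, r ≠ -1 → ∫ x in c..b, (x:ℝ) ^ r = (b ^ (r+1) - c ^ (r+1)) / (r+1) := by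
    intro r hr
    apply _root_.integral_rpow
    right
    refine ⟨hr, ?_⟩
    rw [Set.uIcc_of_le hcb.le]
    intro h0
    exact absurd h0.1 (not_le.mpr hc0)
  have e1 : ∫ x in a..c, min (x - a) (b - x) * x ^ t = ∫ x in a..c, (x ^ (t+1) - a * x ^ t) := by
    apply intervalIntegral.integral_congr
    intro x hx
    rw [Set.uIcc_of_le hac.le] at hx
    have hx0 : (0:ℝ) < x := lt_of_lt_of_le ha hx.1
    have hmin : min (x - a) (b - x) = x - a := by
      apply min_eq_left; rw [hc] at hx; linarith [hx.2]
    dsimp only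
    rw [hmin, Real.rpow_add_one (ne_of_gt hx0)]
    ring
  have e2 : ∫ x in c..b, min (x - a) (b - x) * x ^ t = ∫ x in c..b, (b * x ^ t - x ^ (t+1)) := by
    apply intervalIntegral.integral_congr
    intro x hx
    rw [Set.uIcc_of_le hcb.le] at hx
    have hx0 : (0:ℝ) < x := lt_of_lt_of_le hc0 hx.1
    have hmin : min (x - a) (b - x) = b - x := by
      apply min_eq_right; rw [hc] at hx; linarith [hx.1]
    dsimp only
    rw [hmin, Real.rpow_add_one (ne_of_gt hx0)]
    ring
  have split : II a b t = (∫ x in a..c, min (x - a) (b - x) * x ^ t)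
      + ∫ x in c..b, min (x - a) (b - x) * x ^ t := by
    rw [II, ← intervalIntegral.integral_add_adjacent_intervals
      (integrable_aux ha le_rfl hac.le t) (integrable_aux ha hac.le hab.le t)]
  have i1 : ∫ x in a..c, ((x:ℝ) ^ (t+1) - a * x ^ t)
      = (c ^ (t+2) - a ^ (t+2)) / (t+2) - a * ((c ^ (t+1) - a ^ (t+1)) / (t+1)) := by
    rw [intervalIntegral.integral_sub (integrable_rpow_aux ha le_rfl hac.le (t+1))
      ((integrable_rpow_aux ha le_rfl hac.le t).const_mul a),
      intervalIntegral.integral_const_mul, hiac (t+1) (by intro h; apply h2; linarith),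
      hiac t h1, show t+1+1 = t+2 from by ring]
  have i2 : ∫ x in c..b, (b * (x:ℝ) ^ t - x ^ (t+1))
      = b * ((b ^ (t+1) - c ^ (t+1)) / (t+1)) - (b ^ (t+2) - c ^ (t+2)) / (t+2) := by
    rw [intervalIntegral.integral_sub ((integrable_rpow_aux ha hac.le hab.le t).const_mul b)
      (integrable_rpow_aux ha hac.le hab.le (t+1)),
      intervalIntegral.integral_const_mul, hicb (t+1) (by intro h; apply h2; linarith),
      hicb t h1, show t+1+1 = t+2 from by ring]
  rw [split, e1, e2, i1, i2]
  have ea : a ^ (t + 2) = a ^ (t + 1) * a := by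
    rw [show t + 2 = (t+1) + 1 by ring, Real.rpow_add_one (ne_of_gt ha)]
  have eb : b ^ (t + 2) = b ^ (t + 1) * b := by
    rw [show t + 2 = (t+1) + 1 by ring, Real.rpow_add_one (ne_of_gt (lt_trans ha hab))]
  have ec : c ^ (t + 2) = c ^ (t + 1) * c := by
    rw [show t + 2 = (t+1) + 1 by ring, Real.rpow_add_one (ne_of_gt hc0)]
  rw [ea, eb, ec]
  field_simp
  ring

lemma rpow_bound (ha : 0 < a) (hb : 0 < b) {x : ℝ} (hx : a ≤ x) (hxb : x ≤ b) (t : ℝ) :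
    x ^ t ≤ Real.exp (|t| * (|Real.log a| + |Real.log b|)) := by
  have hx0 : 0 < x := lt_of_lt_of_le ha hx
  rw [Real.rpow_def_of_pos hx0]
  apply Real.exp_le_exp.mpr
  have hla : Real.log a ≤ Real.log x := Real.log_le_log ha hx
  have hlb : Real.log x ≤ Real.log b := Real.log_le_log hx0 hxb
  have h1 : |Real.log x| ≤ |Real.log a| + |Real.log b| := by
    rw [abs_le]
    constructor
    · have := neg_abs_le (Real.log a)
      have := abs_nonneg (Real.log b)
      linarith
    · have := le_abs_self (Real.log b)
      have := abs_nonneg (Real.log a)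
      linarith
  calc Real.log x * t ≤ |Real.log x * t| := le_abs_self _
    _ = |Real.log x| * |t| := abs_mul _ _
    _ ≤ (|Real.log a| + |Real.log b|) * |t| := mul_le_mul_of_nonneg_right h1 (abs_nonneg t)
    _ = |t| * (|Real.log a| + |Real.log b|) := mul_comm _ _

lemma meas_aux (a b t : ℝ) : Measurable (fun x : ℝ => min (x - a) (b - x) * x ^ t) :=
  ((measurable_id.sub measurable_const).min (measurable_const.sub measurable_id)).mul
    (measurable_id.pow_const t)

lemma memLp_aux (ha : 0 < a) (hab : a < b) (t p : ℝ) (hp : 0 ≤ p) (P : ENNReal) :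
    MemLp (fun x : ℝ => (min (x - a) (b - x) * x ^ t) ^ p) P (volume.restrict (Ioc a b)) := by
  have hb : 0 < b := lt_trans ha hab
  have : IsFiniteMeasure (volume.restrict (Ioc a b)) := by
    refine ⟨?_⟩
    rw [Measure.restrict_apply_univ, Real.volume_Ioc]
    exact ENNReal.ofReal_lt_top
  apply MemLp.of_bound ((meas_aux a b t).pow_const p).aestronglyMeasurable
    (((b - a) * Real.exp (|t| * (|Real.log a| + |Real.log b|))) ^ p)
  rw [ae_restrict_iff' measurableSet_Ioc]
  filter_upwards with x hx
  have hx0 : 0 < x := lt_trans ha hx.1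
  have hw0 : 0 ≤ min (x - a) (b - x) := le_min (by linarith [hx.1]) (by linarith [hx.2])
  have hbase0 : 0 ≤ min (x - a) (b - x) * x ^ t := mul_nonneg hw0 (Real.rpow_nonneg hx0.le t)
  rw [Real.norm_eq_abs, abs_of_nonneg (Real.rpow_nonneg hbase0 p)]
  apply Real.rpow_le_rpow hbase0 ?_ hp
  apply mul_le_mul ?_ (rpow_bound ha hb hx.1.le hx.2 t) (Real.rpow_nonneg hx0.le t) (by linarith)
  exact le_trans (min_le_left _ _) (by linarith [hx.2])

lemma II_holder (ha : 0 < a) (hab : a < b) (u v p q : ℝ) (hp : 0 < p) (hq : 0 < q)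
    (hpq : p + q = 1) : II a b (p * u + q * v) ≤ II a b u ^ p * II a b v ^ q := by
  have hb : 0 < b := lt_trans ha hab
  set w := fun x : ℝ => min (x - a) (b - x) with hw
  have hIoc : ∀ t : ℝ, II a b t = ∫ x in Ioc a b, w x * x ^ t := fun t => by
    rw [II, intervalIntegral.integral_of_le hab.le]
  have hconj : (1 / p).HolderConjugate (1 / q) := by
    constructor
    · rw [one_div, one_div, inv_inv, inv_inv, inv_one]; exact hpq
    · positivity
    · positivity
  have hw0' : ∀ x ∈ Ioc a b, 0 ≤ w x := fun x hx =>
    le_min (by linarith [hx.1]) (by linarith [hx.2])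
  have hx0' : ∀ x ∈ Ioc a b, (0:ℝ) < x := fun x hx => lt_trans ha hx.1
  have nf : (0 : ℝ → ℝ) ≤ᶠ[ae (volume.restrict (Ioc a b))] fun x => (w x * x ^ u) ^ p := by
    filter_upwards [ae_restrict_mem measurableSet_Ioc] with x hx
    exact Real.rpow_nonneg (mul_nonneg (hw0' x hx) (Real.rpow_nonneg (hx0' x hx).le u)) p
  have ng : (0 : ℝ → ℝ) ≤ᶠ[ae (volume.restrict (Ioc a b))] fun x => (w x * x ^ v) ^ q := by
    filter_upwards [ae_restrict_mem measurableSet_Ioc] with x hx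
    exact Real.rpow_nonneg (mul_nonneg (hw0' x hx) (Real.rpow_nonneg (hx0' x hx).le v)) q
  have key := MeasureTheory.integral_mul_le_Lp_mul_Lq_of_nonneg (μ := volume.restrict (Ioc a b))
      hconj nf ng (memLp_aux ha hab u p hp.le _) (memLp_aux ha hab v q hq.le _)
  have eFG : ∫ x in Ioc a b, (w x * x ^ u) ^ p * (w x * x ^ v) ^ q
      = II a b (p * u + q * v) := by
    rw [hIoc]
    apply setIntegral_congr_fun measurableSet_Ioc
    intro x hx
    have hx0 : 0 < x := hx0' x hx
    have hw0 : 0 ≤ w x := hw0' x hx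
    have e1 : (w x * x ^ u) ^ p = w x ^ p * x ^ (u * p) := by
      rw [Real.mul_rpow hw0 (Real.rpow_nonneg hx0.le u), ← Real.rpow_mul hx0.le]
    have e2 : (w x * x ^ v) ^ q = w x ^ q * x ^ (v * q) := by
      rw [Real.mul_rpow hw0 (Real.rpow_nonneg hx0.le v), ← Real.rpow_mul hx0.le]
    dsimp only
    rw [e1, e2, show w x ^ p * x ^ (u*p) * (w x ^ q * x ^ (v*q))
        = (w x ^ p * w x ^ q) * (x ^ (u*p) * x ^ (v*q)) from by ring,
      ← Real.rpow_add' hw0 (by rw [hpq]; norm_num), ← Real.rpow_add hx0, hpq, Real.rpow_one,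
      show u * p + v * q = p * u + q * v from by ring]
  have eF : ∫ x in Ioc a b, ((w x * x ^ u) ^ p) ^ (1/p) = II a b u := by
    rw [hIoc]
    apply setIntegral_congr_fun measurableSet_Ioc
    intro x hx
    dsimp only
    rw [← Real.rpow_mul (mul_nonneg (hw0' x hx) (Real.rpow_nonneg (hx0' x hx).le u)),
      mul_one_div, div_self (ne_of_gt hp), Real.rpow_one]
  have eG : ∫ x in Ioc a b, ((w x * x ^ v) ^ q) ^ (1/q) = II a b v := by
    rw [hIoc]
    apply setIntegral_congr_fun measurableSet_Ioc
    intro x hx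
    dsimp only
    rw [← Real.rpow_mul (mul_nonneg (hw0' x hx) (Real.rpow_nonneg (hx0' x hx).le v)),
      mul_one_div, div_self (ne_of_gt hq), Real.rpow_one]
  rw [eFG, eF, eG, one_div_one_div, one_div_one_div] at key
  exact key

lemma II_logconvex (ha : 0 < a) (hab : a < b) :
    ConvexOn ℝ Set.univ (fun t => Real.log (II a b t)) := by
  refine ⟨convex_univ, fun u _ v _ p q hp hq hpq => ?_⟩
  simp only [smul_eq_mul]
  rcases eq_or_lt_of_le hp with hp0 | hp0
  · rw [← hp0] at hpq ⊢; simp at hpq; simp [hpq]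
  rcases eq_or_lt_of_le hq with hq0 | hq0
  · rw [← hq0] at hpq ⊢; simp at hpq; simp [hpq]
  have h := II_holder ha hab u v p q hp0 hq0 hpq
  calc Real.log (II a b (p * u + q * v)) ≤ Real.log (II a b u ^ p * II a b v ^ q) :=
        Real.log_le_log (II_pos ha hab _) h
    _ = p * Real.log (II a b u) + q * Real.log (II a b v) := by
        rw [Real.log_mul (ne_of_gt (Real.rpow_pos_of_pos (II_pos ha hab u) p))
          (ne_of_gt (Real.rpow_pos_of_pos (II_pos ha hab v) q)),
          Real.log_rpow (II_pos ha hab u), Real.log_rpow (II_pos ha hab v)]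

lemma II_ratio_mono (ha : 0 < a) (hab : a < b) {u v : ℝ} (huv : u ≤ v) :
    II a b u / II a b (u - 1) ≤ II a b v / II a b (v - 1) := by
  rcases eq_or_lt_of_le huv with rfl | huv
  · exact le_refl _
  set L : ℝ → ℝ := fun t => Real.log (II a b t) with hL
  have hconv := II_logconvex ha hab
  have key : L u - L (u - 1) ≤ L v - L (v - 1) := by
    have s1 : (L u - L (u-1)) / (u - (u-1)) ≤ (L v - L (u-1)) / (v - (u-1)) :=
      hconv.secant_mono (Set.mem_univ (u-1)) (Set.mem_univ u) (Set.mem_univ v)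
        (by intro h; linarith [h]) (by intro h; linarith [h]) huv.le
    have s2 : (L (u-1) - L v) / ((u-1) - v) ≤ (L (v-1) - L v) / ((v-1) - v) :=
      hconv.secant_mono (Set.mem_univ v) (Set.mem_univ (u-1)) (Set.mem_univ (v-1))
        (by intro h; linarith [h]) (by intro h; linarith [h]) (by linarith)
    have e1 : u - (u - 1) = 1 := by ring
    have e2 : (v - 1) - v = -1 := by ring
    rw [e1, div_one] at s1
    rw [e2, div_neg, div_one] at s2
    have e3 : (L (u-1) - L v) / ((u-1) - v) = (L v - L (u-1)) / (v - (u-1)) := by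
      rw [← neg_div_neg_eq]; ring_nf
    rw [e3] at s2
    linarith
  have h1 : Real.log (II a b u / II a b (u-1)) ≤ Real.log (II a b v / II a b (v-1)) := by
    rw [Real.log_div (ne_of_gt (II_pos ha hab u)) (ne_of_gt (II_pos ha hab (u-1))),
      Real.log_div (ne_of_gt (II_pos ha hab v)) (ne_of_gt (II_pos ha hab (v-1)))]
    exact key
  exact (Real.log_le_log_iff (div_pos (II_pos ha hab u) (II_pos ha hab (u-1)))
    (div_pos (II_pos ha hab v) (II_pos ha hab (v-1)))).mp h1

lemma lam_eq (ha : 0 < a) (hab : a < b) {s : ℝ} (hm1 : s ≠ -1) (h0 : s ≠ 0) (h1 : s ≠ 1) :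
    lam s a b = II a b (s - 1) / II a b (s - 2) := by
  have k1 : II a b (s - 1)
      = (a ^ (s+1) + b ^ (s+1) - 2 * ((a + b) / 2) ^ (s+1)) / (s * (s + 1)) := by
    rw [II_eq ha hab (t := s - 1) (by intro h; apply h0; linarith) (by intro h; apply hm1; linarith),
      show s - 1 + 2 = s + 1 from by ring, show s - 1 + 1 = s from by ring]
  have k2 : II a b (s - 2)
      = (a ^ s + b ^ s - 2 * ((a + b) / 2) ^ s) / ((s - 1) * s) := by
    rw [II_eq ha hab (t := s - 2) (by intro h; apply h1; linarith) (by intro h; apply h0; linarith),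
      show s - 2 + 2 = s from by ring, show s - 2 + 1 = s - 1 from by ring]
  have hs1 : s + 1 ≠ 0 := by intro h; apply hm1; linarith
  have hsm1 : s - 1 ≠ 0 := by intro h; apply h1; linarith
  have hD : a ^ s + b ^ s - 2 * ((a + b) / 2) ^ s ≠ 0 := by
    intro h
    have := II_pos ha hab (s - 2)
    rw [k2, h] at this
    simp at this
  rw [lam, k1, k2]
  field_simp

lemma lam_symm (s a b : ℝ) : lam s a b = lam s b a := by
  unfold lam
  rw [add_comm b a, add_comm (b ^ (s+1)) (a ^ (s+1)), add_comm (b ^ s) (a ^ s)]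

lemma stmt7_aux (a b : ℝ) (ha : 0 < a) (hab : a < b)
    (s₁ s₂ : ℝ) (h1 : s₁ ≠ -1) (h2 : s₁ ≠ 0) (h3 : s₁ ≠ 1)
    (h4 : s₂ ≠ -1) (h5 : s₂ ≠ 0) (h6 : s₂ ≠ 1)
    (hs : s₁ ≤ s₂) : lam s₁ a b ≤ lam s₂ a b := by
  rw [lam_eq ha hab h1 h2 h3, lam_eq ha hab h4 h5 h6]
  have := II_ratio_mono ha hab (u := s₁ - 1) (v := s₂ - 1) (by linarith)
  simpa [show s₁ - 1 - 1 = s₁ - 2 from by ring, show s₂ - 1 - 1 = s₂ - 2 from by ring] using this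

end aux

theorem stmt7 (a b : ℝ) (ha : 0 < a) (hb : 0 < b) (hab : a ≠ b)
    (s₁ s₂ : ℝ) (hs₁ : s₁ ∉ ({-1, 0, 1} : Set ℝ)) (hs₂ : s₂ ∉ ({-1, 0, 1} : Set ℝ))
    (hs : s₁ ≤ s₂) : lam s₁ a b ≤ lam s₂ a b := by
  simp only [Set.mem_insert_iff, Set.mem_singleton_iff, not_or] at hs₁ hs₂
  obtain ⟨h1, h2, h3⟩ := hs₁
  obtain ⟨h4, h5, h6⟩ := hs₂
  rcases lt_or_gt_of_ne hab with h | h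
  · exact stmt7_aux a b ha h s₁ s₂ h1 h2 h3 h4 h5 h6 hs
  · rw [lam_symm s₁, lam_symm s₂]
    exact stmt7_aux b a hb h s₁ s₂ h1 h2 h3 h4 h5 h6 hs
end

section
/- For all positive reals a ≠ b, the mean λ_{-1}(a,b) = (2 log((a+b)/2) - log a - log b) / (1/(2a) + 1/(2b) - 2/(a+b)) satisfies H(a,b) ≤ λ_{-1}(a,b) ≤ G(a,b), where H(a,b) = 2/(1/a+1/b) and G(a,b) = √(ab). -/
theorem stmt8 (a b : ℝ) (ha : 0 < a) (hb : 0 < b) (hab : a ≠ b) :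
    2 / (1 / a + 1 / b) ≤
      (2 * Real.log ((a + b) / 2) - Real.log a - Real.log b) /
        (1 / (2 * a) + 1 / (2 * b) - 2 / (a + b)) ∧
    (2 * Real.log ((a + b) / 2) - Real.log a - Real.log b) /
        (1 / (2 * a) + 1 / (2 * b) - 2 / (a + b)) ≤ Real.sqrt (a * b) := by
  have hab' : a + b > 0 := by linarith
  have hg : 0 < Real.sqrt (a * b) := Real.sqrt_pos.mpr (by positivity)
  set g := Real.sqrt (a * b) with hgdef
  have hg2 : g ^ 2 = a * b := Real.sq_sqrt (by positivity)
  have hsq : (0:ℝ) < (a - b) ^ 2 := by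
    have : a - b ≠ 0 := sub_ne_zero.mpr hab
    positivity
  have hD : 1 / (2 * a) + 1 / (2 * b) - 2 / (a + b)
      = (a - b) ^ 2 / (2 * (a * b) * (a + b)) := by
    field_simp; ring
  have hDpos : 0 < 1 / (2 * a) + 1 / (2 * b) - 2 / (a + b) := by
    rw [hD]; positivity
  have hN : 2 * Real.log ((a + b) / 2) - Real.log a - Real.log b
      = Real.log (((a + b) / 2) ^ 2 / (a * b)) := by
    rw [Real.log_div (by positivity : ((a + b) / 2) ^ 2 ≠ 0) (by positivity : a * b ≠ 0),
      Real.log_pow, Real.log_mul ha.ne' hb.ne']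
    push_cast; ring
  constructor
  · -- lower bound
    rw [div_le_div_iff₀ (by positivity) hDpos, hN, hD]
    have h1 : Real.log ((a * b) / ((a + b) / 2) ^ 2)
        ≤ (a * b) / ((a + b) / 2) ^ 2 - 1 :=
      Real.log_le_sub_one_of_pos (by positivity)
    have h2 : Real.log ((a * b) / ((a + b) / 2) ^ 2)
        = - Real.log (((a + b) / 2) ^ 2 / (a * b)) := by
      rw [← Real.log_inv]; congr 1; field_simp
    have h3 : (a * b) / ((a + b) / 2) ^ 2 - 1 = -((a - b) ^ 2 / (a + b) ^ 2) := by
      field_simp; ring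
    have h4 : (a - b) ^ 2 / (a + b) ^ 2 ≤ Real.log (((a + b) / 2) ^ 2 / (a * b)) := by
      rw [h2, h3] at h1; linarith
    have h5 : 2 * ((a - b) ^ 2 / (2 * (a * b) * (a + b)))
        = (a - b) ^ 2 / (a + b) ^ 2 * (1 / a + 1 / b) := by
      field_simp; ring
    rw [h5]
    exact mul_le_mul_of_nonneg_right h4 (by positivity)
  · -- upper bound
    rw [div_le_iff₀ hDpos, hN, hD]
    have hgle : 2 * g ≤ a + b := by
      have h1 : a * b ≤ ((a + b) / 2) ^ 2 := by nlinarith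
      have := Real.sqrt_le_sqrt h1
      rw [Real.sqrt_sq (by positivity)] at this
      linarith [this]
    set s := (a + b) / (2 * g) with hsdef
    have hs1 : 1 ≤ s := (one_le_div (by positivity)).mpr hgle
    have hspos : 0 < s := by linarith
    have hs2 : s ^ 2 = ((a + b) / 2) ^ 2 / (a * b) := by
      rw [hsdef, ← hg2]; field_simp
    have hlog : Real.log (((a + b) / 2) ^ 2 / (a * b)) = 2 * Real.log s := by
      rw [← hs2, Real.log_pow]; push_cast; ring
    have hsinh : Real.log s ≤ Real.sinh (Real.log s) :=
      Real.self_le_sinh_iff.mpr (Real.log_nonneg hs1)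
    rw [Real.sinh_log hspos] at hsinh
    have key : s - s⁻¹ = g * ((a - b) ^ 2 / (2 * (a * b) * (a + b))) := by
      rw [hsdef]; field_simp; linear_combination (-((a+b)^2)) * hg2
    rw [hlog]
    nlinarith [hsinh, key]
end

section
/- For all positive reals a ≠ b, the mean λ_0(a,b) = (a log a + b log b - (a+b) log((a+b)/2)) / (2 log((a+b)/2) - log a - log b) satisfies G(a,b) ≤ λ_0(a,b) ≤ L(a,b), where G(a,b) = √(ab) and L(a,b) = (b-a)/(log b - log a). -/
set_option maxHeartbeats 1000000

open Real Set

lemma nonneg_on_Ico (f f' : ℝ → ℝ)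
    (hd : ∀ y ∈ Ico (0:ℝ) 1, HasDerivAt f (f' y) y)
    (h0 : f 0 = 0)
    (hpos : ∀ y ∈ Ioo (0:ℝ) 1, 0 ≤ f' y) :
    ∀ x ∈ Ico (0:ℝ) 1, 0 ≤ f x := by
  intro x hx
  have hmono : MonotoneOn f (Ico (0:ℝ) 1) := by
    apply monotoneOn_of_deriv_nonneg (convex_Ico 0 1)
    · exact fun y hy => (hd y hy).continuousAt.continuousWithinAt
    · intro y hy
      rw [interior_Ico] at hy
      exact (hd y (Ioo_subset_Ico_self hy)).differentiableAt.differentiableWithinAt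
    · intro y hy
      rw [interior_Ico] at hy
      rw [(hd y (Ioo_subset_Ico_self hy)).deriv]
      exact hpos y hy
  have := hmono (show (0:ℝ) ∈ Ico (0:ℝ) 1 by constructor <;> norm_num) hx hx.1
  linarith [this]

lemma hd_log1p {y : ℝ} (hy : -1 < y) : HasDerivAt (fun x => log (1+x)) (1/(1+y)) y := by
  have h : HasDerivAt (fun x : ℝ => 1 + x) 1 y := (hasDerivAt_id y).const_add 1
  simpa using h.log (by linarith)

lemma hd_log1m {y : ℝ} (hy : y < 1) : HasDerivAt (fun x => log (1-x)) (-(1/(1-y))) y := by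
  have h : HasDerivAt (fun x : ℝ => 1 - x) (-1) y := (hasDerivAt_id y).const_sub 1
  have := h.log (x := y) (by dsimp; intro hc; linarith)
  simpa [div_eq_mul_inv, neg_div] using this

lemma artanh_lb {x : ℝ} (hx : x ∈ Ico (0:ℝ) 1) :
    2*(x + x^3/3 + x^5/5 + x^7/7 + x^9/9) ≤ log (1+x) - log (1-x) := by
  have key := nonneg_on_Ico
    (fun y => (log (1+y) - log (1-y)) - 2*(y + y^3/3 + y^5/5 + y^7/7 + y^9/9))
    (fun y => 2*y^10/(1-y^2))
    (by
      intro y hy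
      have h1 : (-1:ℝ) < y := by linarith [hy.1]
      have h2 : y < 1 := hy.2
      have hp : HasDerivAt (fun y : ℝ => 2*(y + y^3/3 + y^5/5 + y^7/7 + y^9/9))
          (2*(1 + 3*y^2/3 + 5*y^4/5 + 7*y^6/7 + 9*y^8/9)) y := by
        apply HasDerivAt.const_mul
        exact ((((hasDerivAt_id y).add ((hasDerivAt_pow 3 y).div_const 3)).add
          ((hasDerivAt_pow 5 y).div_const 5)).add ((hasDerivAt_pow 7 y).div_const 7)).add
          ((hasDerivAt_pow 9 y).div_const 9)
      have h := ((hd_log1p h1).sub (hd_log1m h2)).sub hp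
      refine h.congr_deriv ?_
      have e1 : 1 + y ≠ 0 := by linarith
      have e2 : 1 - y ≠ 0 := by linarith
      have e3 : 1 - y^2 ≠ 0 := by intro hc; nlinarith
      field_simp
      ring)
    (by norm_num)
    (by
      intro y hy
      have h0 : (0:ℝ) < y := hy.1
      have : (0:ℝ) < 1 - y^2 := by nlinarith [hy.1, hy.2]
      positivity)
    x hx
  linarith [key]

lemma artanh_ub {x : ℝ} (hx : x ∈ Ico (0:ℝ) 1) :
    log (1+x) - log (1-x) ≤ 2*x + 2*x^3/(3*(1-x^2)) := by
  have key := nonneg_on_Ico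
    (fun y => 2*y + 2*y^3/(3*(1-y^2)) - (log (1+y) - log (1-y)))
    (fun y => (4/3)*y^4/(1-y^2)^2)
    (by
      intro y hy
      have h1 : (-1:ℝ) < y := by linarith [hy.1]
      have h2 : y < 1 := hy.2
      have e3 : 1 - y^2 ≠ 0 := by intro hc; nlinarith
      have e3' : 3*(1-y^2) ≠ 0 := by intro hc; nlinarith
      have hden : HasDerivAt (fun x : ℝ => 3*(1-x^2)) (3*(-(2*y))) y := by
        have := (((hasDerivAt_pow 2 y).const_sub 1)).const_mul (3:ℝ)
        refine this.congr_deriv ?_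
        norm_num
      have hp : HasDerivAt (fun y : ℝ => 2*y + 2*y^3/(3*(1-y^2)))
          (2 + ((2*(3*y^2))*(3*(1-y^2)) - (2*y^3)*(3*(-(2*y))))/(3*(1-y^2))^2) y := by
        have := (((hasDerivAt_id y).const_mul (2:ℝ))).add
          (((hasDerivAt_pow 3 y).const_mul (2:ℝ)).div hden e3')
        refine this.congr_deriv ?_
        norm_num
      have h := hp.sub ((hd_log1p h1).sub (hd_log1m h2))
      refine h.congr_deriv ?_
      have e1 : 1 + y ≠ 0 := by linarith
      have e2 : 1 - y ≠ 0 := by linarith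
      field_simp
      ring)
    (by norm_num)
    (by
      intro y hy
      have h0 : (0:ℝ) < y := hy.1
      have : (0:ℝ) < 1 - y^2 := by nlinarith [hy.1, hy.2]
      positivity)
    x hx
  linarith [key]

lemma du_bound {x : ℝ} (hx : x ∈ Ico (0:ℝ) 1) :
    -(log (1+x) + log (1-x)) ≤ x^2 + x^4/2 + x^6/3 + x^8/(4*(1-x^2)) := by
  have key := nonneg_on_Ico
    (fun y => y^2 + y^4/2 + y^6/3 + y^8/(4*(1-y^2)) + (log (1+y) + log (1-y)))
    (fun y => y^9/(2*(1-y^2)^2))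
    (by
      intro y hy
      have h1 : (-1:ℝ) < y := by linarith [hy.1]
      have h2 : y < 1 := hy.2
      have e3 : 1 - y^2 ≠ 0 := by intro hc; nlinarith
      have e4 : 4*(1-y^2) ≠ 0 := by intro hc; nlinarith
      have hden : HasDerivAt (fun x : ℝ => 4*(1-x^2)) (4*(-(2*y))) y := by
        have := (((hasDerivAt_pow 2 y).const_sub 1)).const_mul (4:ℝ)
        refine this.congr_deriv ?_
        norm_num
      have hp := ((((hasDerivAt_pow 2 y).add ((hasDerivAt_pow 4 y).div_const 2)).add
          ((hasDerivAt_pow 6 y).div_const 3)).add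
          ((hasDerivAt_pow 8 y).div hden e4)).add ((hd_log1p h1).add (hd_log1m h2))
      refine hp.congr_deriv ?_
      have e1 : 1 + y ≠ 0 := by linarith
      have e2 : 1 - y ≠ 0 := by linarith
      field_simp
      ring)
    (by norm_num)
    (by
      intro y hy
      have h0 : (0:ℝ) < y := hy.1
      have : (0:ℝ) < 1 - y^2 := by nlinarith [hy.1, hy.2]
      positivity)
    x hx
  linarith [key]
noncomputable def Wf (y:ℝ) : ℝ :=
  (-(log (1+y) + log (1-y)))*(2*y + (log (1+y) - log (1-y))) - y*(log (1+y) - log (1-y))^2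
noncomputable def Vf (y:ℝ) : ℝ :=
  4*y^2 - 2*y*(log (1+y) - log (1-y)) - (4-2*y^2)*(log (1+y) + log (1-y))
    - (1-y^2)*(log (1+y) - log (1-y))^2
noncomputable def V2f (y:ℝ) : ℝ :=
  12*y - 6*(log (1+y) - log (1-y)) + 2*y*(log (1+y) - log (1-y))^2 + 4*y*(log (1+y) + log (1-y))
noncomputable def Tf (y:ℝ) : ℝ :=
  -20*y^2 + 8*y*(log (1+y) - log (1-y)) + 2*(1-y^2)*(log (1+y) - log (1-y))^2
    + 4*(1-y^2)*(log (1+y) + log (1-y))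
noncomputable def T2f (y:ℝ) : ℝ :=
  -48*y + 16*(log (1+y) - log (1-y)) + 16*y/(1-y^2) - 4*y*(log (1+y) - log (1-y))^2
    - 8*y*(log (1+y) + log (1-y))
noncomputable def R5f (y:ℝ) : ℝ :=
  96*y^2 - 64*y^4 - 16*y*(log (1+y) - log (1-y))*(1-y^2)
    - 4*(log (1+y) - log (1-y))^2*(1-y^2)^2 - 8*(log (1+y) + log (1-y))*(1-y^2)^2
noncomputable def R6f (y:ℝ) : ℝ :=
  176*y - 272*y^3 - 32*(log (1+y) - log (1-y))*(1-2*y^2)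
    + 16*y*(log (1+y) - log (1-y))^2*(1-y^2) + 32*y*(log (1+y) + log (1-y))*(1-y^2)
section tower

lemma hdW {y : ℝ} (h1 : -1 < y) (h2 : y < 1) : HasDerivAt Wf (Vf y / (1-y^2)) y := by
  have hA := hd_log1p h1
  have hB := hd_log1m h2
  have h := (((hA.add hB).neg).mul (((hasDerivAt_id y).const_mul 2).add (hA.sub hB))).sub
      ((hasDerivAt_id y).mul ((hA.sub hB).pow 2))
  refine h.congr_deriv ?_
  have e1 : 1 + y ≠ 0 := by linarith
  have e2 : 1 - y ≠ 0 := by linarith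
  have e3 : 1 - y^2 ≠ 0 := by intro hc; nlinarith
  simp only [Pi.add_apply, Pi.sub_apply, Pi.mul_apply, Pi.neg_apply, Pi.pow_apply, id, Nat.cast_ofNat]
  unfold Vf
  field_simp
  ring

lemma hdV {y : ℝ} (h1 : -1 < y) (h2 : y < 1) : HasDerivAt Vf (V2f y) y := by
  have hA := hd_log1p h1
  have hB := hd_log1m h2
  have h := ((((hasDerivAt_pow 2 y).const_mul 4).sub
      (((hasDerivAt_id y).const_mul 2).mul (hA.sub hB))).sub
      ((((hasDerivAt_pow 2 y).const_mul 2).const_sub 4).mul (hA.add hB))).sub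
      ((((hasDerivAt_pow 2 y).const_sub 1)).mul ((hA.sub hB).pow 2))
  refine h.congr_deriv ?_
  have e1 : 1 + y ≠ 0 := by linarith
  have e2 : 1 - y ≠ 0 := by linarith
  simp only [Pi.add_apply, Pi.sub_apply, Pi.mul_apply, Pi.neg_apply, Pi.pow_apply, id, Nat.cast_ofNat]
  unfold V2f
  field_simp
  ring

lemma hdV2 {y : ℝ} (h1 : -1 < y) (h2 : y < 1) : HasDerivAt V2f (Tf y / (1-y^2)) y := by
  have hA := hd_log1p h1
  have hB := hd_log1m h2
  have h := ((((hasDerivAt_id y).const_mul 12).sub ((hA.sub hB).const_mul 6)).add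
      (((hasDerivAt_id y).const_mul 2).mul ((hA.sub hB).pow 2))).add
      (((hasDerivAt_id y).const_mul 4).mul (hA.add hB))
  refine h.congr_deriv ?_
  have e1 : 1 + y ≠ 0 := by linarith
  have e2 : 1 - y ≠ 0 := by linarith
  have e3 : 1 - y^2 ≠ 0 := by intro hc; nlinarith
  simp only [Pi.add_apply, Pi.sub_apply, Pi.mul_apply, Pi.neg_apply, Pi.pow_apply, id, Nat.cast_ofNat]
  unfold Tf
  field_simp
  ring

lemma hdT {y : ℝ} (h1 : -1 < y) (h2 : y < 1) : HasDerivAt Tf (T2f y) y := by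
  have hA := hd_log1p h1
  have hB := hd_log1m h2
  have h := ((((hasDerivAt_pow 2 y).const_mul (-20)).add
      (((hasDerivAt_id y).const_mul 8).mul (hA.sub hB))).add
      ((((hasDerivAt_pow 2 y).const_sub 1).const_mul 2).mul ((hA.sub hB).pow 2))).add
      ((((hasDerivAt_pow 2 y).const_sub 1).const_mul 4).mul (hA.add hB))
  refine h.congr_deriv ?_
  have e1 : 1 + y ≠ 0 := by linarith
  have e2 : 1 - y ≠ 0 := by linarith
  have e3 : 1 - y^2 ≠ 0 := by intro hc; nlinarith
  simp only [Pi.add_apply, Pi.sub_apply, Pi.mul_apply, Pi.neg_apply, Pi.pow_apply, id, Nat.cast_ofNat]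
  unfold T2f
  field_simp
  ring

lemma hdT2 {y : ℝ} (h1 : -1 < y) (h2 : y < 1) : HasDerivAt T2f (R5f y / (1-y^2)^2) y := by
  have hA := hd_log1p h1
  have hB := hd_log1m h2
  have e3 : 1 - y^2 ≠ 0 := by intro hc; nlinarith
  have hden : HasDerivAt (fun x : ℝ => 1 - x^2) (-(2*y)) y := by
    simpa using (hasDerivAt_pow 2 y).const_sub 1
  have hdiv := (((hasDerivAt_id y).const_mul 16).div hden e3)
  have h := (((((hasDerivAt_id y).const_mul (-48)).add ((hA.sub hB).const_mul 16)).add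
      hdiv).sub
      (((hasDerivAt_id y).const_mul 4).mul ((hA.sub hB).pow 2))).sub
      (((hasDerivAt_id y).const_mul 8).mul (hA.add hB))
  refine h.congr_deriv ?_
  have e1 : 1 + y ≠ 0 := by linarith
  have e2 : 1 - y ≠ 0 := by linarith
  simp only [Pi.add_apply, Pi.sub_apply, Pi.mul_apply, Pi.neg_apply, Pi.pow_apply, id, Nat.cast_ofNat]
  unfold R5f
  field_simp
  ring

lemma hdR5 {y : ℝ} (h1 : -1 < y) (h2 : y < 1) : HasDerivAt R5f (R6f y) y := by
  have hA := hd_log1p h1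
  have hB := hd_log1m h2
  have hden : HasDerivAt (fun x : ℝ => 1 - x^2) (-(2*y)) y := by
    simpa using (hasDerivAt_pow 2 y).const_sub 1
  have h := (((((hasDerivAt_pow 2 y).const_mul 96).sub ((hasDerivAt_pow 4 y).const_mul 64)).sub
      ((((hasDerivAt_id y).const_mul 16).mul (hA.sub hB)).mul hden)).sub
      ((((hA.sub hB).pow 2).const_mul 4).mul (hden.pow 2))).sub
      (((hA.add hB).const_mul 8).mul (hden.pow 2))
  refine h.congr_deriv ?_
  have e1 : 1 + y ≠ 0 := by linarith
  have e2 : 1 - y ≠ 0 := by linarith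
  simp only [Pi.add_apply, Pi.sub_apply, Pi.mul_apply, Pi.neg_apply, Pi.pow_apply, id, Nat.cast_ofNat]
  unfold R6f
  field_simp
  ring
end tower

noncomputable def Sa (y:ℝ) : ℝ := log (1+y) - log (1-y)
noncomputable def Za (y:ℝ) : ℝ := -(log (1+y) + log (1-y))

lemma R6_nonneg : ∀ y ∈ Ioo (0:ℝ) 1, 0 ≤ R6f y := by
  intro y hy
  obtain ⟨hy0, hy1⟩ := hy
  have hIco : y ∈ Ico (0:ℝ) 1 := ⟨hy0.le, hy1⟩
  have hpos : (0:ℝ) < 1 - y^2 := by nlinarith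
  have hR6 : R6f y = 176*y - 272*y^3 - 32*Sa y*(1-2*y^2) + 16*y*(Sa y)^2*(1-y^2) - 32*y*Za y*(1-y^2) := by
    simp only [R6f, Sa, Za]; ring
  have sl : 2*(y + y^3/3 + y^5/5 + y^7/7 + y^9/9) ≤ Sa y := by
    unfold Sa; exact artanh_lb hIco
  have sh : Sa y ≤ 2*y + 2*y^3/(3*(1-y^2)) := by
    unfold Sa; exact artanh_ub hIco
  have du : Za y ≤ y^2 + y^4/2 + y^6/3 + y^8/(4*(1-y^2)) := by
    unfold Za; exact du_bound hIco
  have hsh' : Sa y*(3*(1-y^2)) ≤ 6*y*(1-y^2) + 2*y^3 := by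
    have h := mul_le_mul_of_nonneg_right sh (by positivity : (0:ℝ) ≤ 3*(1-y^2))
    calc Sa y*(3*(1-y^2)) ≤ (2*y + 2*y^3/(3*(1-y^2)))*(3*(1-y^2)) := h
      _ = 6*y*(1-y^2) + 2*y^3 := by field_simp; ring
  have hdu' : Za y*(4*(1-y^2)) ≤ (y^2+y^4/2+y^6/3)*(4*(1-y^2)) + y^8 := by
    have h := mul_le_mul_of_nonneg_right du (by positivity : (0:ℝ) ≤ 4*(1-y^2))
    calc Za y*(4*(1-y^2)) ≤ (y^2 + y^4/2 + y^6/3 + y^8/(4*(1-y^2)))*(4*(1-y^2)) := h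
      _ = (y^2+y^4/2+y^6/3)*(4*(1-y^2)) + y^8 := by field_simp
  have hsl0 : 2*y + 2*y^3/3 ≤ Sa y := by nlinarith [sl, pow_pos hy0 5, pow_pos hy0 7, pow_pos hy0 9]
  have hsl0' : (0:ℝ) ≤ 2*y + 2*y^3/3 := by positivity
  have hs2 : (2*y + 2*y^3/3)^2 ≤ (Sa y)^2 := by nlinarith [hsl0, hsl0']
  rcases le_or_gt (2*y^2) 1 with hc | hc
  · have haux1 : 0 ≤ (6*y*(1-y^2) + 2*y^3 - Sa y*(3*(1-y^2))) * (1-2*y^2) :=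
      mul_nonneg (by linarith) (by linarith)
    have haux2 : 0 ≤ ((Sa y)^2 - (2*y+2*y^3/3)^2) * (48*y*(1-y^2)^2) :=
      mul_nonneg (by linarith) (by positivity)
    have haux3 : 0 ≤ ((y^2+y^4/2+y^6/3)*(4*(1-y^2)) + y^8 - Za y*(4*(1-y^2))) * (24*y*(1-y^2)) :=
      mul_nonneg (by linarith) (by positivity)
    have hc' : (0:ℝ) ≤ 1-2*y^2 := by linarith
    have he' : (0:ℝ) ≤ 2*y^2 := by positivity
    have b0 : (0:ℝ) ≤ (1-2*y^2)^5 := pow_nonneg hc' 5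
    have b1 : (0:ℝ) ≤ (2*y^2)*(1-2*y^2)^4 := mul_nonneg he' (pow_nonneg hc' 4)
    have b2 : (0:ℝ) ≤ (2*y^2)^2*(1-2*y^2)^3 := mul_nonneg (pow_nonneg he' 2) (pow_nonneg hc' 3)
    have b3 : (0:ℝ) ≤ (2*y^2)^3*(1-2*y^2)^2 := mul_nonneg (pow_nonneg he' 3) (pow_nonneg hc' 2)
    have b4 : (0:ℝ) ≤ (2*y^2)^4*(1-2*y^2) := mul_nonneg (pow_nonneg he' 4) hc'
    have b5 : (0:ℝ) ≤ (2*y^2)^5 := pow_nonneg he' 5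
    have hQA : (0:ℝ) ≤ 336 - 736*y^2 + 448*y^4 - (224/3)*y^6 + (232/3)*y^8 + (40/3)*y^10 := by
      linarith [b0, b1, b2, b3, b4, b5]
    have hFA : 0 ≤ 3*(1-y^2)*(176*y-272*y^3) - 32*(1-2*y^2)*(6*y*(1-y^2)+2*y^3)
        + 48*y*(1-y^2)^2*(2*y+2*y^3/3)^2
        - 24*y*(1-y^2)*((y^2+y^4/2+y^6/3)*(4*(1-y^2)) + y^8) := by
      linarith [mul_nonneg hy0.le hQA]
    have key : (3*(1-y^2))*(176*y - 272*y^3 - 32*Sa y*(1-2*y^2) + 16*y*(Sa y)^2*(1-y^2) - 32*y*Za y*(1-y^2))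
        = 32*((6*y*(1-y^2) + 2*y^3 - Sa y*(3*(1-y^2))) * (1-2*y^2))
          + (((Sa y)^2 - (2*y+2*y^3/3)^2) * (48*y*(1-y^2)^2))
          + (((y^2+y^4/2+y^6/3)*(4*(1-y^2)) + y^8 - Za y*(4*(1-y^2))) * (24*y*(1-y^2)))
          + (3*(1-y^2)*(176*y-272*y^3) - 32*(1-2*y^2)*(6*y*(1-y^2)+2*y^3)
            + 48*y*(1-y^2)^2*(2*y+2*y^3/3)^2
            - 24*y*(1-y^2)*((y^2+y^4/2+y^6/3)*(4*(1-y^2)) + y^8)) := by ring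
    have hmul : 0 ≤ (3*(1-y^2))*R6f y := by
      rw [hR6, key]; linarith [haux1, haux2, haux3, hFA]
    nlinarith [hmul, hpos]
  · have haux1 : 0 ≤ (Sa y - 2*(y + y^3/3 + y^5/5 + y^7/7 + y^9/9)) * (32*(2*y^2-1)) :=
      mul_nonneg (by linarith) (by linarith)
    have haux2 : 0 ≤ ((Sa y)^2 - (2*y+2*y^3/3)^2) * (16*y*(1-y^2)) :=
      mul_nonneg (by linarith) (by positivity)
    have haux3 : 0 ≤ ((y^2+y^4/2+y^6/3)*(4*(1-y^2)) + y^8 - Za y*(4*(1-y^2))) * (8*y) :=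
      mul_nonneg (by linarith) (by positivity)
    have hc' : (0:ℝ) ≤ 2*y^2-1 := by linarith
    have he' : (0:ℝ) ≤ 2-2*y^2 := by nlinarith
    have b0 : (0:ℝ) ≤ (2-2*y^2)^5 := pow_nonneg he' 5
    have b1 : (0:ℝ) ≤ (2*y^2-1)*(2-2*y^2)^4 := mul_nonneg hc' (pow_nonneg he' 4)
    have b2 : (0:ℝ) ≤ (2*y^2-1)^2*(2-2*y^2)^3 := mul_nonneg (pow_nonneg hc' 2) (pow_nonneg he' 3)
    have b3 : (0:ℝ) ≤ (2*y^2-1)^3*(2-2*y^2)^2 := mul_nonneg (pow_nonneg hc' 3) (pow_nonneg he' 2)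
    have b4 : (0:ℝ) ≤ (2*y^2-1)^4*(2-2*y^2) := mul_nonneg (pow_nonneg hc' 4) he'
    have b5 : (0:ℝ) ≤ (2*y^2-1)^5 := pow_nonneg hc' 5
    have hQB : (0:ℝ) ≤ 112 - (400/3)*y^2 + (368/15)*y^4 - (4336/315)*y^6 + (424/63)*y^8 + (128/9)*y^10 := by
      linarith [b0, b1, b2, b3, b4, b5]
    have hFB : 0 ≤ 176*y - 272*y^3 + 32*(2*y^2-1)*(2*(y + y^3/3 + y^5/5 + y^7/7 + y^9/9))
        + 16*y*(1-y^2)*(2*y+2*y^3/3)^2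
        - 8*y*((y^2+y^4/2+y^6/3)*(4*(1-y^2)) + y^8) := by
      linarith [mul_nonneg hy0.le hQB]
    have key : (176*y - 272*y^3 - 32*Sa y*(1-2*y^2) + 16*y*(Sa y)^2*(1-y^2) - 32*y*Za y*(1-y^2))
        = ((Sa y - 2*(y + y^3/3 + y^5/5 + y^7/7 + y^9/9)) * (32*(2*y^2-1)))
          + (((Sa y)^2 - (2*y+2*y^3/3)^2) * (16*y*(1-y^2)))
          + (((y^2+y^4/2+y^6/3)*(4*(1-y^2)) + y^8 - Za y*(4*(1-y^2))) * (8*y))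
          + (176*y - 272*y^3 + 32*(2*y^2-1)*(2*(y + y^3/3 + y^5/5 + y^7/7 + y^9/9))
            + 16*y*(1-y^2)*(2*y+2*y^3/3)^2
            - 8*y*((y^2+y^4/2+y^6/3)*(4*(1-y^2)) + y^8)) := by ring
    rw [hR6, key]; linarith [haux1, haux2, haux3, hFB]

lemma R5_nonneg : ∀ x ∈ Ico (0:ℝ) 1, 0 ≤ R5f x :=
  nonneg_on_Ico R5f R6f (fun y hy => hdR5 (by linarith [hy.1]) hy.2)
    (by norm_num [R5f]) R6_nonneg

lemma T2_nonneg : ∀ x ∈ Ico (0:ℝ) 1, 0 ≤ T2f x :=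
  nonneg_on_Ico T2f (fun y => R5f y/(1-y^2)^2) (fun y hy => hdT2 (by linarith [hy.1]) hy.2)
    (by norm_num [T2f])
    (fun y hy => by
      have h := R5_nonneg y (Ioo_subset_Ico_self hy)
      have h2 : (0:ℝ) < 1-y^2 := by nlinarith [hy.1, hy.2]
      positivity)

lemma T_nonneg : ∀ x ∈ Ico (0:ℝ) 1, 0 ≤ Tf x :=
  nonneg_on_Ico Tf T2f (fun y hy => hdT (by linarith [hy.1]) hy.2)
    (by norm_num [Tf]) (fun y hy => T2_nonneg y (Ioo_subset_Ico_self hy))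

lemma V2_nonneg : ∀ x ∈ Ico (0:ℝ) 1, 0 ≤ V2f x :=
  nonneg_on_Ico V2f (fun y => Tf y/(1-y^2)) (fun y hy => hdV2 (by linarith [hy.1]) hy.2)
    (by norm_num [V2f])
    (fun y hy => by
      have h := T_nonneg y (Ioo_subset_Ico_self hy)
      have h2 : (0:ℝ) < 1-y^2 := by nlinarith [hy.1, hy.2]
      positivity)

lemma V_nonneg : ∀ x ∈ Ico (0:ℝ) 1, 0 ≤ Vf x :=
  nonneg_on_Ico Vf V2f (fun y hy => hdV (by linarith [hy.1]) hy.2)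
    (by norm_num [Vf]) (fun y hy => V2_nonneg y (Ioo_subset_Ico_self hy))

lemma W_nonneg : ∀ x ∈ Ico (0:ℝ) 1, 0 ≤ Wf x :=
  nonneg_on_Ico Wf (fun y => Vf y/(1-y^2)) (fun y hy => hdW (by linarith [hy.1]) hy.2)
    (by norm_num [Wf])
    (fun y hy => by
      have h := V_nonneg y (Ioo_subset_Ico_self hy)
      have h2 : (0:ℝ) < 1-y^2 := by nlinarith [hy.1, hy.2]
      positivity)
noncomputable def Ff (u:ℝ) : ℝ := 2*u*log u - (u+1)*log ((u^2+1)/2)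
noncomputable def F1f (u:ℝ) : ℝ := 2*log u + 2 - log ((u^2+1)/2) - 2*u*(u+1)/(u^2+1)

lemma hdF {u : ℝ} (hu : 0 < u) : HasDerivAt Ff (F1f u) u := by
  have hne : u ≠ 0 := ne_of_gt hu
  have hq : (0:ℝ) < u^2+1 := by positivity
  have hinner : HasDerivAt (fun x : ℝ => (x^2+1)/2) ((2*u)/2) u := by
    have := ((hasDerivAt_pow 2 u).add_const 1).div_const 2
    refine this.congr_deriv ?_; norm_num
  have hlog2 : HasDerivAt (fun x : ℝ => log ((x^2+1)/2)) ((2*u)/2 / ((u^2+1)/2)) u :=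
    hinner.log (by positivity)
  have h := (((hasDerivAt_id u).const_mul 2).mul (hasDerivAt_log hne)).sub
    (((hasDerivAt_id u).add_const 1).mul hlog2)
  refine h.congr_deriv ?_
  simp only [Pi.add_apply, Pi.sub_apply, Pi.mul_apply, Pi.neg_apply, Pi.pow_apply, id, Nat.cast_ofNat]
  unfold F1f
  field_simp
  ring

lemma hdF1 {u : ℝ} (hu : 0 < u) :
    HasDerivAt F1f (2*(u-1)^2*(u+1)/(u*(u^2+1)^2)) u := by
  have hne : u ≠ 0 := ne_of_gt hu
  have hq : (0:ℝ) < u^2+1 := by positivity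
  have hinner : HasDerivAt (fun x : ℝ => (x^2+1)/2) ((2*u)/2) u := by
    have := ((hasDerivAt_pow 2 u).add_const 1).div_const 2
    refine this.congr_deriv ?_; norm_num
  have hlog2 : HasDerivAt (fun x : ℝ => log ((x^2+1)/2)) ((2*u)/2 / ((u^2+1)/2)) u :=
    hinner.log (by positivity)
  have hnum : HasDerivAt (fun x : ℝ => 2*x*(x+1)) (2*(u+1) + 2*u*1) u := by
    have := ((hasDerivAt_id u).const_mul (2:ℝ)).mul ((hasDerivAt_id u).add_const 1)
    exact this.congr_deriv (by simp)
  have hden : HasDerivAt (fun x : ℝ => x^2+1) (2*u) u := by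
    have := (hasDerivAt_pow 2 u).add_const 1
    refine this.congr_deriv ?_; norm_num
  have hfrac := hnum.div hden (ne_of_gt hq)
  have h := ((((hasDerivAt_log hne).const_mul 2).add_const 2).sub hlog2).sub hfrac
  refine h.congr_deriv ?_
  field_simp
  ring

lemma F1_mono : MonotoneOn F1f (Ioi (0:ℝ)) := by
  apply monotoneOn_of_deriv_nonneg (convex_Ioi 0)
  · exact fun u hu => (hdF1 hu).continuousAt.continuousWithinAt
  · intro u hu
    rw [interior_Ioi] at hu
    exact (hdF1 hu).differentiableAt.differentiableWithinAt
  · intro u hu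
    rw [interior_Ioi] at hu
    rw [(hdF1 hu).deriv]
    have : (0:ℝ) < u := hu
    positivity

lemma F1_one : F1f 1 = 0 := by norm_num [F1f]

lemma Ff_one : Ff 1 = 0 := by norm_num [Ff]

lemma F_nonneg {u : ℝ} (hu : 0 < u) : 0 ≤ Ff u := by
  rcases le_or_gt 1 u with h1 | h1
  · have hmono : MonotoneOn Ff (Ici (1:ℝ)) := by
      apply monotoneOn_of_deriv_nonneg (convex_Ici 1)
      · exact fun v hv => (hdF (by linarith [mem_Ici.mp hv])).continuousAt.continuousWithinAt
      · intro v hv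
        rw [interior_Ici] at hv
        exact (hdF (by linarith [mem_Ioi.mp hv])).differentiableAt.differentiableWithinAt
      · intro v hv
        rw [interior_Ici] at hv
        have hv1 : (1:ℝ) < v := hv
        rw [(hdF (by linarith)).deriv]
        have := F1_mono (mem_Ioi.mpr one_pos) (mem_Ioi.mpr (by linarith : (0:ℝ) < v)) hv1.le
        rw [F1_one] at this
        exact this
    have := hmono (mem_Ici.mpr le_rfl) (mem_Ici.mpr h1) h1
    rw [Ff_one] at this
    exact this
  · have hanti : AntitoneOn Ff (Ioc (0:ℝ) 1) := by
      apply antitoneOn_of_deriv_nonpos (convex_Ioc 0 1)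
      · exact fun v hv => (hdF hv.1).continuousAt.continuousWithinAt
      · intro v hv
        rw [interior_Ioc] at hv
        exact (hdF hv.1).differentiableAt.differentiableWithinAt
      · intro v hv
        rw [interior_Ioc] at hv
        rw [(hdF hv.1).deriv]
        have := F1_mono (mem_Ioi.mpr hv.1) (mem_Ioi.mpr one_pos) hv.2.le
        rw [F1_one] at this
        exact this
    have := hanti (mem_Ioc.mpr ⟨hu, h1.le⟩) (mem_Ioc.mpr ⟨one_pos, le_rfl⟩) h1.le
    rw [Ff_one] at this
    exact this

lemma L1 {u v : ℝ} (hu : 0 < u) (hv : 0 < v) :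
    (u+v)*log ((u^2+v^2)/2) ≤ 2*u*log u + 2*v*log v := by
  have hF := F_nonneg (div_pos hu hv)
  unfold Ff at hF
  rw [Real.log_div (ne_of_gt hu) (ne_of_gt hv)] at hF
  have harg : ((u/v)^2+1)/2 = ((u^2+v^2)/2)/v^2 := by
    rw [eq_div_iff (by positivity : (v:ℝ)^2 ≠ 0)]
    field_simp
  rw [harg, Real.log_div (by positivity) (by positivity), Real.log_pow] at hF
  push_cast at hF
  have h2 := mul_nonneg hv.le hF
  have hkey : v * (2*(u/v)*(log u - log v) - (u/v+1)*(log ((u^2+v^2)/2) - 2*log v))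
      = 2*u*log u + 2*v*log v - (u+v)*log ((u^2+v^2)/2) := by
    field_simp
    ring
  rw [hkey] at h2
  linarith

lemma lower_main {a b : ℝ} (ha : 0 < a) (hb : 0 < b) (hab : a ≠ b) :
    Real.sqrt (a * b) ≤
      (a * Real.log a + b * Real.log b - (a + b) * Real.log ((a + b) / 2)) /
        (2 * Real.log ((a + b) / 2) - Real.log a - Real.log b) := by
  have hu : 0 < Real.sqrt a := Real.sqrt_pos.mpr ha
  have hv : 0 < Real.sqrt b := Real.sqrt_pos.mpr hb
  set u := Real.sqrt a with hu'
  set v := Real.sqrt b with hv'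
  have hu2 : u^2 = a := Real.sq_sqrt ha.le
  have hv2 : v^2 = b := Real.sq_sqrt hb.le
  have huv : u ≠ v := by
    intro h; apply hab; rw [← hu2, ← hv2, h]
  rw [← hu2, ← hv2]
  have hsq : Real.sqrt (u^2 * v^2) = u*v := by
    rw [show u^2*v^2 = (u*v)^2 by ring, Real.sqrt_sq (by positivity)]
  rw [hsq, Real.log_pow, Real.log_pow]
  push_cast
  have huvne : (u-v) ≠ 0 := sub_ne_zero.mpr huv
  have hsqpos : 0 < (u-v)^2 := lt_of_le_of_ne (sq_nonneg _) (Ne.symm (pow_ne_zero 2 huvne))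
  have h1 : u*v < (u^2+v^2)/2 := by nlinarith
  have hD' : 0 < 2 * log ((u ^ 2 + v ^ 2) / 2) - 2 * log u - 2 * log v := by
    have hlt := Real.log_lt_log (by positivity : (0:ℝ) < u*v) h1
    rw [Real.log_mul (ne_of_gt hu) (ne_of_gt hv)] at hlt
    linarith
  rw [le_div_iff₀ hD']
  have hL1 := L1 hu hv
  have key : 0 ≤ (u+v)*(2*u*log u + 2*v*log v - (u+v)*log ((u^2+v^2)/2)) :=
    mul_nonneg (by positivity) (by linarith)
  nlinarith [key]

lemma upper_main {a b : ℝ} (ha : 0 < a) (hb : 0 < b) (h : a < b) :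
    (a * Real.log a + b * Real.log b - (a + b) * Real.log ((a + b) / 2)) /
        (2 * Real.log ((a + b) / 2) - Real.log a - Real.log b) ≤
      (b - a) / (Real.log b - Real.log a) := by
  have hS : 0 < log b - log a := sub_pos.mpr (Real.log_lt_log ha h)
  have hab2 : (0:ℝ) < a + b := by linarith
  have hA : (0:ℝ) < (a+b)/2 := by linarith
  have hD : 0 < 2 * log ((a+b)/2) - log a - log b := by
    have h1 : a*b < ((a+b)/2)^2 := by nlinarith [pow_pos (show (0:ℝ) < b - a by linarith) 2]
    have hlt := Real.log_lt_log (by positivity : (0:ℝ) < a*b) h1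
    rw [Real.log_mul (ne_of_gt ha) (ne_of_gt hb)] at hlt
    rw [Real.log_pow] at hlt
    push_cast at hlt
    linarith
  rw [div_le_div_iff₀ hD hS]
  have hd0 : 0 ≤ (b-a)/(a+b) := div_nonneg (by linarith) (by linarith)
  have hd1 : (b-a)/(a+b) < 1 := by rw [div_lt_one hab2]; linarith
  have hW := W_nonneg ((b-a)/(a+b)) ⟨hd0, hd1⟩
  unfold Wf at hW
  have h1p : 1 + (b-a)/(a+b) = b/((a+b)/2) := by field_simp; ring
  have h1m : 1 - (b-a)/(a+b) = a/((a+b)/2) := by field_simp; ring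
  rw [h1p, h1m, Real.log_div (ne_of_gt hb) (ne_of_gt hA),
    Real.log_div (ne_of_gt ha) (ne_of_gt hA)] at hW
  have key := mul_nonneg (le_of_lt hA) hW
  have hiden : ((a+b)/2) * ((-(log b - log ((a+b)/2) + (log a - log ((a+b)/2)))) *
        (2*((b-a)/(a+b)) + (log b - log ((a+b)/2) - (log a - log ((a+b)/2))))
        - ((b-a)/(a+b))*(log b - log ((a+b)/2) - (log a - log ((a+b)/2)))^2)
      = (b-a)*(2*log ((a+b)/2) - log a - log b)
        - (a*log a + b*log b - (a+b)*log ((a+b)/2))*(log b - log a) := by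
    field_simp
    ring
  rw [hiden] at key
  linarith

theorem stmt9 (a b : ℝ) (ha : 0 < a) (hb : 0 < b) (hab : a ≠ b) :
    Real.sqrt (a * b) ≤
      (a * Real.log a + b * Real.log b - (a + b) * Real.log ((a + b) / 2)) /
        (2 * Real.log ((a + b) / 2) - Real.log a - Real.log b) ∧
    (a * Real.log a + b * Real.log b - (a + b) * Real.log ((a + b) / 2)) /
        (2 * Real.log ((a + b) / 2) - Real.log a - Real.log b) ≤
      (b - a) / (Real.log b - Real.log a) := by
  constructor
  · exact lower_main ha hb hab
  · rcases lt_or_gt_of_ne hab with hlt | hgt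
    · exact upper_main ha hb hlt
    · have this1 := upper_main hb ha hgt
      rw [add_comm b a] at this1
      have e2 : (a-b)/(log a - log b) = (b-a)/(log b - log a) := by
        rw [← neg_sub b a, ← neg_sub (log b) (log a), neg_div_neg_eq]
      rw [e2] at this1
      have e3 : (b*log b + a*log a - (a+b)*log ((a+b)/2))/(2*log ((a+b)/2) - log b - log a)
          = (a*log a + b*log b - (a+b)*log ((a+b)/2))/(2*log ((a+b)/2) - log a - log b) := by
        ring_nf
      rw [e3] at this1
      exact this1
end

section
/- For all positive reals a ≠ b, the mean λ_1(a,b) = (b-a)² / (4(a log a + b log b - (a+b) log((a+b)/2))) satisfies L(a,b) ≤ λ_1(a,b) ≤ I(a,b), where L(a,b) = (b-a)/(log b - log a) and I(a,b) = (1/e)(b^b/a^a)^{1/(b-a)}. -/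
open Real Set

noncomputable def sP (h : ℝ) : ℝ := Real.log (1+h) - Real.log (1-h)
noncomputable def sD (h : ℝ) : ℝ := (1-h) * Real.log (1-h) + (1+h) * Real.log (1+h)
noncomputable def sN (h : ℝ) : ℝ := (1+h) * Real.log (1+h) - (1-h) * Real.log (1-h)

lemma stmt10aux_hd1p (x : ℝ) : HasDerivAt (fun h : ℝ => 1+h) 1 x := by
  simpa using (hasDerivAt_id x).const_add 1

lemma stmt10aux_hd1m (x : ℝ) : HasDerivAt (fun h : ℝ => 1-h) (-1) x := by
  simpa using (hasDerivAt_id x).const_sub 1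

lemma stmt10aux_hdlog1p (x : ℝ) (h1 : 0 < 1+x) :
    HasDerivAt (fun h : ℝ => Real.log (1+h)) (1/(1+x)) x := by
  simpa using (stmt10aux_hd1p x).log h1.ne'

lemma stmt10aux_hdlog1m (x : ℝ) (h2 : 0 < 1-x) :
    HasDerivAt (fun h : ℝ => Real.log (1-h)) (-(1/(1-x))) x := by
  have := (stmt10aux_hd1m x).log h2.ne'
  simpa [neg_div] using this

lemma stmt10aux_hd_sP (x : ℝ) (h1 : 0 < 1+x) (h2 : 0 < 1-x) :
    HasDerivAt sP (1/(1+x) + 1/(1-x)) x := by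
  have := (stmt10aux_hdlog1p x h1).sub (stmt10aux_hdlog1m x h2)
  exact this.congr_deriv (by ring)

lemma stmt10aux_hd_sD (x : ℝ) (h1 : 0 < 1+x) (h2 : 0 < 1-x) :
    HasDerivAt sD (sP x) x := by
  have hA : HasDerivAt (fun h : ℝ => (1-h) * Real.log (1-h))
      (-1 * Real.log (1-x) + (1-x) * -(1/(1-x))) x :=
    (stmt10aux_hd1m x).mul (stmt10aux_hdlog1m x h2)
  have hB : HasDerivAt (fun h : ℝ => (1+h) * Real.log (1+h))
      (1 * Real.log (1+x) + (1+x) * (1/(1+x))) x :=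
    (stmt10aux_hd1p x).mul (stmt10aux_hdlog1p x h1)
  have := hA.add hB
  refine this.congr_deriv ?_
  unfold sP
  field_simp
  ring

lemma stmt10aux_hd_sN (x : ℝ) (h1 : 0 < 1+x) (h2 : 0 < 1-x) :
    HasDerivAt sN (Real.log (1+x) + Real.log (1-x) + 2) x := by
  have hA : HasDerivAt (fun h : ℝ => (1-h) * Real.log (1-h))
      (-1 * Real.log (1-x) + (1-x) * -(1/(1-x))) x :=
    (stmt10aux_hd1m x).mul (stmt10aux_hdlog1m x h2)
  have hB : HasDerivAt (fun h : ℝ => (1+h) * Real.log (1+h))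
      (1 * Real.log (1+x) + (1+x) * (1/(1+x))) x :=
    (stmt10aux_hd1p x).mul (stmt10aux_hdlog1p x h1)
  have := hB.sub hA
  refine this.congr_deriv ?_
  field_simp
  ring

lemma stmt10aux_nonneg {f f' : ℝ → ℝ} (hf0 : f 0 = 0)
    (hd : ∀ x ∈ Set.Ico (0:ℝ) 1, HasDerivAt f (f' x) x)
    (hpos : ∀ x ∈ Set.Ioo (0:ℝ) 1, 0 ≤ f' x) :
    ∀ x ∈ Set.Ico (0:ℝ) 1, 0 ≤ f x := by
  have hmono : MonotoneOn f (Set.Ico (0:ℝ) 1) := by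
    apply monotoneOn_of_deriv_nonneg (convex_Ico 0 1)
    · exact fun y hy => (hd y hy).continuousAt.continuousWithinAt
    · rw [interior_Ico]
      exact fun y hy => ((hd y (Ioo_subset_Ico_self hy)).differentiableAt).differentiableWithinAt
    · rw [interior_Ico]
      intro y hy
      rw [(hd y (Ioo_subset_Ico_self hy)).deriv]
      exact hpos y hy
  intro x hx
  have h0 : (0:ℝ) ∈ Set.Ico (0:ℝ) 1 := by constructor <;> norm_num
  have := hmono h0 hx hx.1
  simpa [hf0] using this

-- L1 : sP x ≥ 2x
lemma stmt10aux_L1 : ∀ x ∈ Set.Ico (0:ℝ) 1, 0 ≤ sP x - 2*x := by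
  apply stmt10aux_nonneg (f' := fun x => 1/(1+x) + 1/(1-x) - 2)
  · simp [sP]
  · intro x hx
    have h1 : (0:ℝ) < 1+x := by linarith [hx.1]
    have h2 : (0:ℝ) < 1-x := by linarith [hx.2]
    exact ((stmt10aux_hd_sP x h1 h2).sub ((hasDerivAt_id x).const_mul 2)).congr_deriv (by simp)
  · intro x hx
    have h1 : (0:ℝ) < 1+x := by linarith [hx.1]
    have h2 : (0:ℝ) < 1-x := by linarith [hx.2]
    have key : 1/(1+x) + 1/(1-x) - 2 = 2*x^2 / ((1+x)*(1-x)) := by field_simp; ring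
    rw [key]; positivity

-- L2 : sP x ≤ 2x/(1-x²)
lemma stmt10aux_L2 : ∀ x ∈ Set.Ico (0:ℝ) 1, 0 ≤ 2*x/((1+x)*(1-x)) - sP x := by
  apply stmt10aux_nonneg (f' := fun x => (2*(1+x^2))/((1+x)*(1-x))^2 - (1/(1+x) + 1/(1-x)))
  · simp [sP]
  · intro x hx
    have h1 : (0:ℝ) < 1+x := by linarith [hx.1]
    have h2 : (0:ℝ) < 1-x := by linarith [hx.2]
    have hq : HasDerivAt (fun h : ℝ => 2*h/((1+h)*(1-h)))
        ((2*((1+x)*(1-x)) - 2*x*(1*(1-x) + (1+x)*(-1)))/((1+x)*(1-x))^2) x := by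
      have := ((hasDerivAt_id x).const_mul 2).div
        ((stmt10aux_hd1p x).mul (stmt10aux_hd1m x)) (by positivity : ((1+x)*(1-x)) ≠ 0)
      exact this.congr_deriv (by simp)
    have := hq.sub (stmt10aux_hd_sP x h1 h2)
    refine this.congr_deriv ?_
    have hne : ((1+x)*(1-x))^2 ≠ 0 := by positivity
    field_simp
    ring
  · intro x hx
    have h1 : (0:ℝ) < 1+x := by linarith [hx.1]
    have h2 : (0:ℝ) < 1-x := by linarith [hx.2]
    have key : (2*(1+x^2))/((1+x)*(1-x))^2 - (1/(1+x) + 1/(1-x))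
        = 4*x^2/((1+x)*(1-x))^2 := by field_simp; ring
    rw [key]; positivity

-- L3 : sD x ≥ x²
lemma stmt10aux_L3 : ∀ x ∈ Set.Ico (0:ℝ) 1, 0 ≤ sD x - x^2 := by
  apply stmt10aux_nonneg (f' := fun x => sP x - 2*x)
  · simp [sD]
  · intro x hx
    have h1 : (0:ℝ) < 1+x := by linarith [hx.1]
    have h2 : (0:ℝ) < 1-x := by linarith [hx.2]
    have := (stmt10aux_hd_sD x h1 h2).sub
      (((hasDerivAt_id x).pow 2))
    exact this.congr_deriv (by simp [two_mul, mul_comm])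
  · exact fun x hx => stmt10aux_L1 x (Ioo_subset_Ico_self hx)

-- L4 : sD x ≤ x²/((1+x)(1-x))
lemma stmt10aux_L4 : ∀ x ∈ Set.Ico (0:ℝ) 1, 0 ≤ x^2/((1+x)*(1-x)) - sD x := by
  apply stmt10aux_nonneg (f' := fun x => 2*x/((1+x)*(1-x))^2 - sP x)
  · simp [sD]
  · intro x hx
    have h1 : (0:ℝ) < 1+x := by linarith [hx.1]
    have h2 : (0:ℝ) < 1-x := by linarith [hx.2]
    have hq : HasDerivAt (fun h : ℝ => h^2/((1+h)*(1-h)))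
        ((2*x*((1+x)*(1-x)) - x^2*(1*(1-x) + (1+x)*(-1)))/((1+x)*(1-x))^2) x := by
      have hp : HasDerivAt (fun h : ℝ => h^2) (2*x) x := by
        exact ((hasDerivAt_id x).pow 2).congr_deriv (by simp)
      exact hp.div ((stmt10aux_hd1p x).mul (stmt10aux_hd1m x)) (by positivity)
    have := hq.sub (stmt10aux_hd_sD x h1 h2)
    refine this.congr_deriv ?_
    have hne : ((1+x)*(1-x))^2 ≠ 0 := by positivity
    field_simp
    ring
  · intro x hx
    have h1 : (0:ℝ) < 1+x := by linarith [hx.1]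
    have h2 : (0:ℝ) < 1-x := by linarith [hx.2]
    have hL2 := stmt10aux_L2 x (Ioo_subset_Ico_self hx)
    have hmono : 2*x/((1+x)*(1-x)) ≤ 2*x/((1+x)*(1-x))^2 := by
      rw [div_le_div_iff₀ (by positivity) (by positivity)]
      nlinarith [mul_nonneg (mul_nonneg (by linarith [hx.1] : (0:ℝ) ≤ 2*x) (mul_pos h1 h2).le) (sq_nonneg x)]
    linarith

-- L5 : 2 sD ≤ x sP
lemma stmt10aux_L5 : ∀ x ∈ Set.Ico (0:ℝ) 1, 0 ≤ x * sP x - 2 * sD x := by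
  apply stmt10aux_nonneg (f' := fun x => 2*x/((1+x)*(1-x)) - sP x)
  · simp [sD]
  · intro x hx
    have h1 : (0:ℝ) < 1+x := by linarith [hx.1]
    have h2 : (0:ℝ) < 1-x := by linarith [hx.2]
    have := ((hasDerivAt_id x).mul (stmt10aux_hd_sP x h1 h2)).sub
      ((stmt10aux_hd_sD x h1 h2).const_mul 2)
    refine this.congr_deriv ?_
    unfold sP
    simp only [id_eq]
    field_simp
    ring
  · exact fun x hx => stmt10aux_L2 x (Ioo_subset_Ico_self hx)

-- L6 : sN x ≤ 2x
lemma stmt10aux_L6 : ∀ x ∈ Set.Ico (0:ℝ) 1, 0 ≤ 2*x - sN x := by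
  apply stmt10aux_nonneg (f' := fun x => -(Real.log (1+x) + Real.log (1-x)))
  · simp [sN]
  · intro x hx
    have h1 : (0:ℝ) < 1+x := by linarith [hx.1]
    have h2 : (0:ℝ) < 1-x := by linarith [hx.2]
    have := ((hasDerivAt_id x).const_mul 2).sub (stmt10aux_hd_sN x h1 h2)
    refine this.congr_deriv ?_
    simp
    try ring
  · intro x hx
    have h1 : (0:ℝ) < 1+x := by linarith [hx.1]
    have h2 : (0:ℝ) < 1-x := by linarith [hx.2]
    have ha : Real.log (1+x) ≤ x := by
      have := Real.log_le_sub_one_of_pos h1; linarith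
    have hb : Real.log (1-x) ≤ -x := by
      have := Real.log_le_sub_one_of_pos h2; linarith
    linarith

-- log lower bound helper : log y ≥ 1 - 1/y
lemma stmt10aux_log_lb {y : ℝ} (hy : 0 < y) : 1 - 1/y ≤ Real.log y := by
  have := Real.log_le_sub_one_of_pos (show (0:ℝ) < 1/y by positivity)
  rw [Real.log_div one_ne_zero hy.ne', Real.log_one] at this
  have h1y : 1/y - 1 ≥ 0 - Real.log y := by linarith
  linarith

-- L7 : sN x ≥ 2x - x³/((1+x)(1-x))
lemma stmt10aux_L7 : ∀ x ∈ Set.Ico (0:ℝ) 1, 0 ≤ sN x - 2*x + x^3/((1+x)*(1-x)) := by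
  apply stmt10aux_nonneg
    (f' := fun x => (Real.log (1+x) + Real.log (1-x)) + (3*x^2 - x^4)/((1+x)*(1-x))^2)
  · simp [sN]
  · intro x hx
    have h1 : (0:ℝ) < 1+x := by linarith [hx.1]
    have h2 : (0:ℝ) < 1-x := by linarith [hx.2]
    have hc : HasDerivAt (fun h : ℝ => h^3/((1+h)*(1-h)))
        ((3*x^2*((1+x)*(1-x)) - x^3*(1*(1-x) + (1+x)*(-1)))/((1+x)*(1-x))^2) x := by
      have hp : HasDerivAt (fun h : ℝ => h^3) (3*x^2) x := by
        exact ((hasDerivAt_id x).pow 3).congr_deriv (by simp)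
      exact hp.div ((stmt10aux_hd1p x).mul (stmt10aux_hd1m x)) (by positivity)
    have := ((stmt10aux_hd_sN x h1 h2).sub ((hasDerivAt_id x).const_mul 2)).add hc
    refine this.congr_deriv ?_
    try simp only [id_eq]
    field_simp
    try ring
  · intro x hx
    have h1 : (0:ℝ) < 1+x := by linarith [hx.1]
    have h2 : (0:ℝ) < 1-x := by linarith [hx.2]
    have hP : (0:ℝ) < (1+x)*(1-x) := mul_pos h1 h2
    have hlog : Real.log (1+x) + Real.log (1-x) = Real.log ((1+x)*(1-x)) :=
      (Real.log_mul h1.ne' h2.ne').symm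
    have hlb : 1 - 1/((1+x)*(1-x)) ≤ Real.log ((1+x)*(1-x)) := stmt10aux_log_lb hP
    have key : 1 - 1/((1+x)*(1-x)) = -(x^2/((1+x)*(1-x))) := by field_simp; ring
    have hfrac : x^2/((1+x)*(1-x)) ≤ (3*x^2 - x^4)/((1+x)*(1-x))^2 := by
      rw [div_le_div_iff₀ hP (by positivity)]
      nlinarith [mul_nonneg (sq_nonneg x) hP.le, sq_nonneg x, mul_pos hx.1 hP]
    rw [hlog]
    linarith [hlb, hfrac, key ▸ hlb]

-- L8
lemma stmt10aux_L8 : ∀ x ∈ Set.Ico (0:ℝ) 1,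
    0 ≤ 2*sP x + 8*x/((1+x)*(1-x)) - 12*x := by
  apply stmt10aux_nonneg
    (f' := fun x => 2*(1/(1+x) + 1/(1-x)) + (8 + 8*x^2)/((1+x)*(1-x))^2 - 12)
  · simp [sP]
  · intro x hx
    have h1 : (0:ℝ) < 1+x := by linarith [hx.1]
    have h2 : (0:ℝ) < 1-x := by linarith [hx.2]
    have hc : HasDerivAt (fun h : ℝ => 8*h/((1+h)*(1-h)))
        ((8*((1+x)*(1-x)) - 8*x*(1*(1-x) + (1+x)*(-1)))/((1+x)*(1-x))^2) x := by
      have := ((hasDerivAt_id x).const_mul 8).div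
        ((stmt10aux_hd1p x).mul (stmt10aux_hd1m x)) (by positivity : ((1+x)*(1-x)) ≠ 0)
      exact this.congr_deriv (by simp)
    have := (((stmt10aux_hd_sP x h1 h2).const_mul 2).add hc).sub
      ((hasDerivAt_id x).const_mul 12)
    refine this.congr_deriv ?_
    have hne : ((1+x)*(1-x))^2 ≠ 0 := by positivity
    field_simp
    ring
  · intro x hx
    have h1 : (0:ℝ) < 1+x := by linarith [hx.1]
    have h2 : (0:ℝ) < 1-x := by linarith [hx.2]
    have key : 2*(1/(1+x) + 1/(1-x)) + (8 + 8*x^2)/((1+x)*(1-x))^2 - 12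
        = (28*x^2 - 12*x^4)/((1+x)*(1-x))^2 := by field_simp; ring
    rw [key]
    apply div_nonneg _ (by positivity)
    have hx2 : x^2 ≤ 1 := by nlinarith [hx.1, hx.2]
    nlinarith [sq_nonneg x, mul_nonneg (sq_nonneg x) (sub_nonneg.mpr hx2)]

-- L9
lemma stmt10aux_L9 : ∀ x ∈ Set.Ico (0:ℝ) 1, 0 ≤ 4*x*sP x - 6*x^2 - 2*sD x := by
  apply stmt10aux_nonneg (f' := fun x => 2*sP x + 8*x/((1+x)*(1-x)) - 12*x)
  · simp [sD, sP]
  · intro x hx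
    have h1 : (0:ℝ) < 1+x := by linarith [hx.1]
    have h2 : (0:ℝ) < 1-x := by linarith [hx.2]
    have hA : HasDerivAt (fun h : ℝ => 4*h*sP h)
        (4*sP x + 4*x*(1/(1+x) + 1/(1-x))) x := by
      have := ((hasDerivAt_id x).const_mul 4).mul (stmt10aux_hd_sP x h1 h2)
      refine this.congr_deriv ?_
      simp only [id_eq]
      ring
    have hB : HasDerivAt (fun h : ℝ => 6*h^2) (12*x) x := by
      have := ((hasDerivAt_id x).pow 2).const_mul 6
      refine this.congr_deriv ?_
      simp; ring
    have := (hA.sub hB).sub ((stmt10aux_hd_sD x h1 h2).const_mul 2)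
    refine this.congr_deriv ?_
    field_simp
    ring
  · exact fun x hx => stmt10aux_L8 x (Ioo_subset_Ico_self hx)

-- L10 : S ≥ 0
lemma stmt10aux_L10 : ∀ x ∈ Set.Ico (0:ℝ) 1,
    0 ≤ 6*x - 2*x^3 - 3*sP x*((1+x)*(1-x)) - 2*x*sD x := by
  apply stmt10aux_nonneg (f' := fun x => 4*x*sP x - 6*x^2 - 2*sD x)
  · simp [sP, sD]
  · intro x hx
    have h1 : (0:ℝ) < 1+x := by linarith [hx.1]
    have h2 : (0:ℝ) < 1-x := by linarith [hx.2]
    have hA : HasDerivAt (fun h : ℝ => 6*h - 2*h^3) (6 - 6*x^2) x := by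
      have := ((hasDerivAt_id x).const_mul 6).sub (((hasDerivAt_id x).pow 3).const_mul 2)
      refine this.congr_deriv ?_
      simp; ring
    have hB : HasDerivAt (fun h : ℝ => 3*sP h*((1+h)*(1-h)))
        ((3*(1/(1+x) + 1/(1-x)))*((1+x)*(1-x)) + 3*sP x*(1*(1-x) + (1+x)*(-1))) x := by
      have := (((stmt10aux_hd_sP x h1 h2).const_mul 3)).mul
        ((stmt10aux_hd1p x).mul (stmt10aux_hd1m x))
      refine this.congr_deriv ?_
      simp only [Pi.mul_apply]
      try ring
    have hC : HasDerivAt (fun h : ℝ => 2*h*sD h) (2*sD x + 2*x*sP x) x := by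
      have := ((hasDerivAt_id x).const_mul 2).mul (stmt10aux_hd_sD x h1 h2)
      refine this.congr_deriv ?_
      simp only [id_eq]
      ring
    have := (hA.sub hB).sub hC
    refine this.congr_deriv ?_
    field_simp
    ring
  · exact fun x hx => stmt10aux_L9 x (Ioo_subset_Ico_self hx)

-- L11 : R' ≥ 0
lemma stmt10aux_L11 : ∀ x ∈ Set.Ico (0:ℝ) 1,
    0 ≤ -2*(Real.log (1+x) + Real.log (1-x)) + 4*x^2/((1+x)*(1-x))
        - 2*sD x/((1+x)*(1-x)) - (sP x)^2 := by
  apply stmt10aux_nonneg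
    (f' := fun x => 2*(6*x - 2*x^3 - 3*sP x*((1+x)*(1-x)) - 2*x*sD x)/((1+x)*(1-x))^2)
  · simp [sD, sP]
  · intro x hx
    have h1 : (0:ℝ) < 1+x := by linarith [hx.1]
    have h2 : (0:ℝ) < 1-x := by linarith [hx.2]
    have hPne : ((1+x)*(1-x)) ≠ 0 := by positivity
    have hA : HasDerivAt (fun h : ℝ => -2*(Real.log (1+h) + Real.log (1-h)))
        (-2*(1/(1+x) + -(1/(1-x)))) x := by
      have := ((stmt10aux_hdlog1p x h1).add (stmt10aux_hdlog1m x h2)).const_mul (-2)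
      exact this
    have hB : HasDerivAt (fun h : ℝ => 4*h^2/((1+h)*(1-h)))
        ((8*x*((1+x)*(1-x)) - 4*x^2*(1*(1-x) + (1+x)*(-1)))/((1+x)*(1-x))^2) x := by
      have hp : HasDerivAt (fun h : ℝ => 4*h^2) (8*x) x := by
        have := ((hasDerivAt_id x).pow 2).const_mul 4
        refine this.congr_deriv ?_; simp; ring
      exact hp.div ((stmt10aux_hd1p x).mul (stmt10aux_hd1m x)) hPne
    have hC : HasDerivAt (fun h : ℝ => 2*sD h/((1+h)*(1-h)))
        ((2*sP x*((1+x)*(1-x)) - 2*sD x*(1*(1-x) + (1+x)*(-1)))/((1+x)*(1-x))^2) x := by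
      exact ((stmt10aux_hd_sD x h1 h2).const_mul 2).div
        ((stmt10aux_hd1p x).mul (stmt10aux_hd1m x)) hPne
    have hD : HasDerivAt (fun h : ℝ => (sP h)^2) (2*sP x*(1/(1+x) + 1/(1-x))) x := by
      have := (stmt10aux_hd_sP x h1 h2).pow 2
      refine this.congr_deriv ?_
      simp
      try ring
    have := ((hA.add hB).sub hC).sub hD
    refine this.congr_deriv ?_
    have hne : ((1+x)*(1-x))^2 ≠ 0 := by positivity
    field_simp
    ring
  · intro x hx
    have h1 : (0:ℝ) < 1+x := by linarith [hx.1]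
    have h2 : (0:ℝ) < 1-x := by linarith [hx.2]
    have := stmt10aux_L10 x (Ioo_subset_Ico_self hx)
    positivity

-- L12 : R ≥ 0
lemma stmt10aux_L12 : ∀ x ∈ Set.Ico (0:ℝ) 1,
    0 ≤ -2*x*(Real.log (1+x) + Real.log (1-x)) - sP x * sD x := by
  apply stmt10aux_nonneg
    (f' := fun x => -2*(Real.log (1+x) + Real.log (1-x)) + 4*x^2/((1+x)*(1-x))
        - 2*sD x/((1+x)*(1-x)) - (sP x)^2)
  · simp [sP, sD]
  · intro x hx
    have h1 : (0:ℝ) < 1+x := by linarith [hx.1]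
    have h2 : (0:ℝ) < 1-x := by linarith [hx.2]
    have hA : HasDerivAt (fun h : ℝ => -2*h*(Real.log (1+h) + Real.log (1-h)))
        (-2*(Real.log (1+x) + Real.log (1-x)) + -2*x*(1/(1+x) + -(1/(1-x)))) x := by
      have := ((hasDerivAt_id x).const_mul (-2)).mul
        ((stmt10aux_hdlog1p x h1).add (stmt10aux_hdlog1m x h2))
      refine this.congr_deriv ?_
      simp only [id_eq, Pi.add_apply]
      ring
    have hB : HasDerivAt (fun h : ℝ => sP h * sD h)
        ((1/(1+x) + 1/(1-x))*sD x + sP x * sP x) x :=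
      (stmt10aux_hd_sP x h1 h2).mul (stmt10aux_hd_sD x h1 h2)
    have := hA.sub hB
    refine this.congr_deriv ?_
    field_simp
    ring
  · exact fun x hx => stmt10aux_L11 x (Ioo_subset_Ico_self hx)

noncomputable def sW (h : ℝ) : ℝ := sN h/(2*h) - 1 + (Real.log (sD h) - Real.log (h^2))

lemma stmt10aux_sD_pos : ∀ x ∈ Set.Ioo (0:ℝ) 1, 0 < sD x := by
  intro x hx
  have := stmt10aux_L3 x (Ioo_subset_Ico_self hx)
  nlinarith [hx.1]

lemma stmt10aux_sP_pos : ∀ x ∈ Set.Ioo (0:ℝ) 1, 0 < sP x := by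
  intro x hx
  have := stmt10aux_L1 x (Ioo_subset_Ico_self hx)
  nlinarith [hx.1]

lemma stmt10aux_W_hasDeriv : ∀ x ∈ Set.Ioo (0:ℝ) 1, HasDerivAt sW
    (((Real.log (1+x) + Real.log (1-x) + 2)*(2*x) - sN x*2)/(2*x)^2
      + sP x / sD x - (2*x)/x^2) x := by
  intro x hx
  have h1 : (0:ℝ) < 1+x := by linarith [hx.1]
  have h2 : (0:ℝ) < 1-x := by linarith [hx.2]
  have hx0 : x ≠ 0 := ne_of_gt hx.1
  have hDpos := stmt10aux_sD_pos x hx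
  have hA : HasDerivAt (fun h : ℝ => sN h/(2*h))
      (((Real.log (1+x) + Real.log (1-x) + 2)*(2*x) - sN x*2)/(2*x)^2) x := by
    have := (stmt10aux_hd_sN x h1 h2).div ((hasDerivAt_id x).const_mul 2)
      (by simpa using mul_ne_zero two_ne_zero hx0)
    exact this.congr_deriv (by simp)
  have hB : HasDerivAt (fun h : ℝ => Real.log (sD h)) (sP x / sD x) x := by
    have := (stmt10aux_hd_sD x h1 h2).log hDpos.ne'
    simpa using this
  have hC : HasDerivAt (fun h : ℝ => Real.log (h^2)) ((2*x)/x^2) x := by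
    have hp : HasDerivAt (fun h : ℝ => h^2) (2*x) x := by
      exact ((hasDerivAt_id x).pow 2).congr_deriv (by simp)
    exact hp.log (pow_ne_zero 2 hx0)
  have := ((hA.sub_const 1).add (hB.sub hC))
  refine this.congr_deriv ?_
  ring

lemma stmt10aux_W_mono : MonotoneOn sW (Set.Ioo (0:ℝ) 1) := by
  apply monotoneOn_of_deriv_nonneg (convex_Ioo 0 1)
  · exact fun y hy => (stmt10aux_W_hasDeriv y hy).continuousAt.continuousWithinAt
  · rw [interior_Ioo]
    exact fun y hy => (stmt10aux_W_hasDeriv y hy).differentiableAt.differentiableWithinAt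
  · rw [interior_Ioo]
    intro x hx
    rw [(stmt10aux_W_hasDeriv x hx).deriv]
    have h1 : (0:ℝ) < 1+x := by linarith [hx.1]
    have h2 : (0:ℝ) < 1-x := by linarith [hx.2]
    have hDpos := stmt10aux_sD_pos x hx
    have hR := stmt10aux_L12 x (Ioo_subset_Ico_self hx)
    have hx0 : x ≠ 0 := ne_of_gt hx.1
    have hDne : x*Real.log (1+x) - x*Real.log (1-x) + Real.log (1+x) + Real.log (1-x) ≠ 0 := by
      have h := hDpos
      unfold sD at h
      intro hc
      rw [show x*Real.log (1+x) - x*Real.log (1-x) + Real.log (1+x) + Real.log (1-x)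
        = (1-x)*Real.log (1-x) + (1+x)*Real.log (1+x) by ring] at hc
      rw [hc] at h
      exact lt_irrefl 0 h
    have key : ((Real.log (1+x) + Real.log (1-x) + 2)*(2*x) - sN x*2)/(2*x)^2
        + sP x / sD x - (2*x)/x^2
        = (-2*x*(Real.log (1+x) + Real.log (1-x)) - sP x * sD x)/(2*x^2*sD x) := by
      unfold sN sP
      have hD' := hDpos.ne'
      field_simp
      unfold sD
      ring
    rw [key]
    positivity

lemma stmt10aux_W_bounds : ∀ x ∈ Set.Ioo (0:ℝ) 1,
    -(x^2/(2*((1+x)*(1-x)))) ≤ sW x ∧ sW x ≤ -Real.log ((1+x)*(1-x)) := by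
  intro x hx
  have h1 : (0:ℝ) < 1+x := by linarith [hx.1]
  have h2 : (0:ℝ) < 1-x := by linarith [hx.2]
  have hx0 : (0:ℝ) < x := hx.1
  have hDpos := stmt10aux_sD_pos x hx
  have hL3 := stmt10aux_L3 x (Ioo_subset_Ico_self hx)
  have hL4 := stmt10aux_L4 x (Ioo_subset_Ico_self hx)
  have hL6 := stmt10aux_L6 x (Ioo_subset_Ico_self hx)
  have hL7 := stmt10aux_L7 x (Ioo_subset_Ico_self hx)
  have hP : (0:ℝ) < (1+x)*(1-x) := mul_pos h1 h2
  constructor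
  · -- lower bound
    have hN : -(x^2/(2*((1+x)*(1-x)))) ≤ sN x/(2*x) - 1 := by
      have h7 : -(x^3/((1+x)*(1-x))) ≤ sN x - 2*x := by linarith
      calc -(x^2/(2*((1+x)*(1-x)))) = (-(x^3/((1+x)*(1-x))))/(2*x) := by
            field_simp
        _ ≤ (sN x - 2*x)/(2*x) := by gcongr
        _ = sN x/(2*x) - 1 := by field_simp
    have hlog : Real.log (x^2) ≤ Real.log (sD x) :=
      Real.log_le_log (by positivity) (by linarith)
    unfold sW
    linarith
  · -- upper bound
    have hN : sN x/(2*x) - 1 ≤ 0 := by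
      rw [sub_nonpos, div_le_one (by positivity)]
      linarith
    have hlog : Real.log (sD x) ≤ Real.log (x^2) - Real.log ((1+x)*(1-x)) := by
      have : Real.log (sD x) ≤ Real.log (x^2/((1+x)*(1-x))) :=
        Real.log_le_log hDpos (by linarith)
      rwa [Real.log_div (by positivity) hP.ne'] at this
    unfold sW
    linarith

lemma stmt10aux_W_tendsto :
    Filter.Tendsto sW (nhdsWithin 0 (Set.Ioi 0)) (nhds 0) := by
  have hmem : Set.Ioo (0:ℝ) 1 ∈ nhdsWithin 0 (Set.Ioi 0) :=
    Ioo_mem_nhdsGT_of_mem (by constructor <;> norm_num)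
  have hlo : Filter.Tendsto (fun x : ℝ => -(x^2/(2*((1+x)*(1-x)))))
      (nhdsWithin 0 (Set.Ioi 0)) (nhds 0) := by
    have : ContinuousAt (fun x : ℝ => -(x^2/(2*((1+x)*(1-x))))) 0 := by
      apply ContinuousAt.neg
      apply ContinuousAt.div
      · fun_prop
      · fun_prop
      · norm_num
    have h := this.tendsto.mono_left
      (nhdsWithin_le_nhds : nhdsWithin (0:ℝ) (Set.Ioi 0) ≤ nhds 0)
    norm_num at h
    exact h
  have hhi : Filter.Tendsto (fun x : ℝ => -Real.log ((1+x)*(1-x)))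
      (nhdsWithin 0 (Set.Ioi 0)) (nhds 0) := by
    have : ContinuousAt (fun x : ℝ => -Real.log ((1+x)*(1-x))) 0 := by
      apply ContinuousAt.neg
      apply Real.continuousAt_log (by norm_num) |>.comp
      fun_prop
    have h := this.tendsto.mono_left
      (nhdsWithin_le_nhds : nhdsWithin (0:ℝ) (Set.Ioi 0) ≤ nhds 0)
    norm_num at h
    exact h
  apply tendsto_of_tendsto_of_tendsto_of_le_of_le' hlo hhi
  · filter_upwards [hmem] with x hx
    exact (stmt10aux_W_bounds x hx).1
  · filter_upwards [hmem] with x hx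
    exact (stmt10aux_W_bounds x hx).2

lemma stmt10aux_W_nonneg : ∀ x ∈ Set.Ioo (0:ℝ) 1, 0 ≤ sW x := by
  intro x hx
  have hmem : Set.Ioo (0:ℝ) x ∈ nhdsWithin 0 (Set.Ioi 0) :=
    Ioo_mem_nhdsGT_of_mem (by constructor <;> [norm_num; exact hx.1])
  apply le_of_tendsto stmt10aux_W_tendsto
  filter_upwards [hmem] with t ht
  exact stmt10aux_W_mono ⟨ht.1, lt_trans ht.2 hx.2⟩ hx (le_of_lt ht.2)

lemma stmt10aux_identric (a b : ℝ) (ha : 0 < a) (hb : 0 < b) :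
    (1/Real.exp 1) * (b ^ b / a ^ a) ^ (1/(b-a))
      = Real.exp ((b*Real.log b - a*Real.log a)/(b-a) - 1) := by
  have h1 : b ^ b / a ^ a = Real.exp (Real.log b * b - Real.log a * a) := by
    rw [Real.rpow_def_of_pos hb, Real.rpow_def_of_pos ha, Real.exp_sub]
  rw [h1, ← Real.exp_mul]
  rw [show (Real.log b * b - Real.log a * a) * (1/(b-a))
    = ((b*Real.log b - a*Real.log a)/(b-a) - 1) - (-1) by ring]
  rw [Real.exp_sub]
  rw [Real.exp_neg]
  field_simp

lemma stmt10aux_main (a b : ℝ) (ha : 0 < a) (hab : a < b) :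
    (b - a) / (Real.log b - Real.log a) ≤
      (b - a) ^ 2 /
        (4 * (a * Real.log a + b * Real.log b - (a + b) * Real.log ((a + b) / 2))) ∧
    (b - a) ^ 2 /
        (4 * (a * Real.log a + b * Real.log b - (a + b) * Real.log ((a + b) / 2))) ≤
      (1 / Real.exp 1) * (b ^ b / a ^ a) ^ (1 / (b - a)) := by
  have hb : 0 < b := lt_trans ha hab
  set s : ℝ := (a+b)/2 with hs_def
  set h : ℝ := (b-a)/(a+b) with hh_def
  have hab2 : 0 < a + b := by linarith
  have hs : 0 < s := by positivity
  have hh0 : 0 < h := div_pos (by linarith) hab2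
  have hh1 : h < 1 := by
    rw [hh_def, div_lt_one hab2]; linarith
  have hmem : h ∈ Set.Ioo (0:ℝ) 1 := ⟨hh0, hh1⟩
  have h1p : (0:ℝ) < 1+h := by linarith
  have h1m : (0:ℝ) < 1-h := by linarith
  have ea : a = s*(1-h) := by
    rw [hs_def, hh_def]; field_simp; ring
  have eb : b = s*(1+h) := by
    rw [hs_def, hh_def]; field_simp; ring
  have eloga : Real.log a = Real.log s + Real.log (1-h) := by
    rw [ea, Real.log_mul hs.ne' h1m.ne']
  have elogb : Real.log b = Real.log s + Real.log (1+h) := by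
    rw [eb, Real.log_mul hs.ne' h1p.ne']
  have eP : Real.log b - Real.log a = sP h := by
    rw [elogb, eloga]; unfold sP; ring
  have eBA : b - a = 2*s*h := by
    rw [hs_def, hh_def]; field_simp
  have e3 : (a+b)/2 = s := hs_def.symm
  have eden : a * Real.log a + b * Real.log b - (a + b) * Real.log ((a + b) / 2)
      = s * sD h := by
    rw [e3, eloga, elogb, ea, eb]
    unfold sD; ring
  have hsPpos := stmt10aux_sP_pos h hmem
  have hsDpos := stmt10aux_sD_pos h hmem
  have eI : (1 / Real.exp 1) * (b ^ b / a ^ a) ^ (1 / (b - a))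
      = s * Real.exp (sN h/(2*h) - 1) := by
    rw [stmt10aux_identric a b ha hb]
    have earg : (b*Real.log b - a*Real.log a)/(b-a) - 1
        = Real.log s + (sN h/(2*h) - 1) := by
      rw [eBA, elogb, eloga, ea, eb]
      unfold sN
      field_simp
      ring
    rw [earg, Real.exp_add, Real.exp_log hs]
  constructor
  · rw [eP, eBA, eden]
    have hL5 := stmt10aux_L5 h (Ioo_subset_Ico_self hmem)
    rw [div_le_div_iff₀ hsPpos (by positivity)]
    nlinarith [mul_le_mul_of_nonneg_left (show 2*sD h ≤ h*sP h from by linarith)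
      (show (0:ℝ) ≤ 4*s^2*h by positivity)]
  · rw [eI, eBA, eden]
    have hW := stmt10aux_W_nonneg h hmem
    have key : h^2/sD h ≤ Real.exp (sN h/(2*h) - 1) := by
      rw [← Real.log_le_iff_le_exp (by positivity)]
      rw [Real.log_div (by positivity) hsDpos.ne']
      unfold sW at hW
      linarith
    calc (2*s*h)^2/(4*(s*sD h)) = s*(h^2/sD h) := by
          field_simp; ring
      _ ≤ s*Real.exp (sN h/(2*h) - 1) := by
          exact mul_le_mul_of_nonneg_left key hs.le

theorem stmt10 (a b : ℝ) (ha : 0 < a) (hb : 0 < b) (hab : a ≠ b) :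
    (b - a) / (Real.log b - Real.log a) ≤
      (b - a) ^ 2 /
        (4 * (a * Real.log a + b * Real.log b - (a + b) * Real.log ((a + b) / 2))) ∧
    (b - a) ^ 2 /
        (4 * (a * Real.log a + b * Real.log b - (a + b) * Real.log ((a + b) / 2))) ≤
      (1 / Real.exp 1) * (b ^ b / a ^ a) ^ (1 / (b - a)) := by
  rcases lt_or_gt_of_ne hab with hlt | hgt
  · exact stmt10aux_main a b ha hlt
  · obtain ⟨H1, H2⟩ := stmt10aux_main b a hb hgt
    have eL : (b - a) / (Real.log b - Real.log a)
        = (a - b) / (Real.log a - Real.log b) := by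
      rw [show b - a = -(a-b) by ring, show Real.log b - Real.log a
        = -(Real.log a - Real.log b) by ring, neg_div_neg_eq]
    have eSq : (b - a)^2 = (a - b)^2 := by ring
    have eDen : a * Real.log a + b * Real.log b - (a + b) * Real.log ((a + b) / 2)
        = b * Real.log b + a * Real.log a - (b + a) * Real.log ((b + a) / 2) := by
      rw [add_comm b a]; ring
    have eI : (1 / Real.exp 1) * (b ^ b / a ^ a) ^ (1 / (b - a))
        = (1 / Real.exp 1) * (a ^ a / b ^ b) ^ (1 / (a - b)) := by
      rw [stmt10aux_identric a b ha hb, stmt10aux_identric b a hb ha]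
      congr 1
      rw [show b*Real.log b - a*Real.log a = -(a*Real.log a - b*Real.log b) by ring,
        show b - a = -(a-b) by ring, neg_div_neg_eq]
    rw [eL, eSq, eDen, eI]
    exact ⟨H1, H2⟩
end

section
/- For all t ∈ (0,1), the function φ(t) = ((log(1+t) - log(1-t))/(2t))·((1+t)log(1+t) + (1-t)log(1-t)) + log(1+t) + log(1-t) satisfies φ(t) ≤ 0. -/
open Real Set

/-- generic: `f` nonincreasing from `f 0` on `[0,1)`. -/
lemma decr_aux {f f' : ℝ → ℝ} (hc : ContinuousOn f (Set.Ico 0 1))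
    (hd : ∀ x ∈ Set.Ioo (0:ℝ) 1, HasDerivAt f (f' x) x)
    (hn : ∀ x ∈ Set.Ioo (0:ℝ) 1, f' x ≤ 0) :
    ∀ t ∈ Set.Ico (0:ℝ) 1, f t ≤ f 0 := by
  have h := antitoneOn_of_deriv_nonpos (convex_Ico (0:ℝ) 1) hc
    (fun x hx =>
      ((hd x (by rwa [interior_Ico] at hx)).differentiableAt.differentiableWithinAt))
    (fun x hx => by
      rw [interior_Ico] at hx
      rw [(hd x hx).deriv]; exact hn x hx)
  intro t ht
  exact h (Set.left_mem_Ico.mpr one_pos) ht ht.1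

/-- generic: `f` nondecreasing from `f 0` on `[0,1)`. -/
lemma incr_aux {f f' : ℝ → ℝ} (hc : ContinuousOn f (Set.Ico 0 1))
    (hd : ∀ x ∈ Set.Ioo (0:ℝ) 1, HasDerivAt f (f' x) x)
    (hn : ∀ x ∈ Set.Ioo (0:ℝ) 1, 0 ≤ f' x) :
    ∀ t ∈ Set.Ico (0:ℝ) 1, f 0 ≤ f t := by
  have h := monotoneOn_of_deriv_nonneg (convex_Ico (0:ℝ) 1) hc
    (fun x hx =>
      ((hd x (by rwa [interior_Ico] at hx)).differentiableAt.differentiableWithinAt))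
    (fun x hx => by
      rw [interior_Ico] at hx
      rw [(hd x hx).deriv]; exact hn x hx)
  intro t ht
  exact h (Set.left_mem_Ico.mpr one_pos) ht ht.1

lemma cont_la : ContinuousOn (fun t : ℝ => Real.log (1 + t)) (Set.Ico 0 1) :=
  (continuousOn_const.add continuousOn_id).log
    (fun x hx => by have := hx.1; intro h; simp only [Pi.add_apply, id_eq] at h; nlinarith)

lemma cont_lb : ContinuousOn (fun t : ℝ => Real.log (1 - t)) (Set.Ico 0 1) :=
  (continuousOn_const.sub continuousOn_id).log
    (fun x hx => by have := hx.2; intro h; simp only [Pi.sub_apply, id_eq] at h; nlinarith)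

lemma lem1 : ∀ t ∈ Set.Ico (0:ℝ) 1,
    2 * t ≤ Real.log (1 + t) - Real.log (1 - t) := by
  have h := incr_aux (f := fun t => Real.log (1 + t) - Real.log (1 - t) - 2 * t)
    (f' := fun x => 2 * x ^ 2 / ((1 + x) * (1 - x)))
    ((cont_la.sub cont_lb).sub (continuousOn_const.mul continuousOn_id))
    (fun x hx => by
      obtain ⟨hx0, hx1⟩ := hx
      have h1 : (0:ℝ) < 1 + x := by linarith
      have h2 : (0:ℝ) < 1 - x := by linarith
      have ha : HasDerivAt (fun t : ℝ => Real.log (1 + t)) (1 / (1 + x)) x :=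
        ((hasDerivAt_id x).const_add 1).log h1.ne'
      have hb : HasDerivAt (fun t : ℝ => Real.log (1 - t)) (-1 / (1 - x)) x :=
        ((hasDerivAt_id x).const_sub 1).log h2.ne'
      have H := (ha.sub hb).sub ((hasDerivAt_id x).const_mul 2)
      exact H.congr_deriv (by field_simp; ring))
    (fun x hx => by
      obtain ⟨hx0, hx1⟩ := hx
      have h1 : (0:ℝ) < 1 + x := by linarith
      have h2 : (0:ℝ) < 1 - x := by linarith
      positivity)
  intro t ht
  have := h t ht
  simp only [Real.log_one, add_zero, sub_zero, mul_zero] at this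
  norm_num at this
  linarith

lemma lem2 : ∀ t ∈ Set.Ico (0:ℝ) 1,
    (1 - t) * Real.log (1 + t) + (1 + t) * Real.log (1 - t) + 3 * t ^ 2 ≤ 0 := by
  have h := decr_aux
    (f := fun t => (1 - t) * Real.log (1 + t) + (1 + t) * Real.log (1 - t) + 3 * t ^ 2)
    (f' := fun x => -(Real.log (1 + x) - Real.log (1 - x)) - 4 * x / ((1 + x) * (1 - x)) + 6 * x)
    ((((continuousOn_const.sub continuousOn_id).mul cont_la).add
      ((continuousOn_const.add continuousOn_id).mul cont_lb)).add (by fun_prop))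
    (fun x hx => by
      obtain ⟨hx0, hx1⟩ := hx
      have h1 : (0:ℝ) < 1 + x := by linarith
      have h2 : (0:ℝ) < 1 - x := by linarith
      have ha : HasDerivAt (fun t : ℝ => Real.log (1 + t)) (1 / (1 + x)) x :=
        ((hasDerivAt_id x).const_add 1).log h1.ne'
      have hb : HasDerivAt (fun t : ℝ => Real.log (1 - t)) (-1 / (1 - x)) x :=
        ((hasDerivAt_id x).const_sub 1).log h2.ne'
      have H := ((((hasDerivAt_id x).const_sub 1).mul ha).add
        (((hasDerivAt_id x).const_add 1).mul hb)).add ((hasDerivAt_pow 2 x).const_mul 3)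
      exact H.congr_deriv (by simp only [id_eq, Pi.add_apply, Pi.sub_apply, Pi.mul_apply]; field_simp; ring))
    (fun x hx => by
      obtain ⟨hx0, hx1⟩ := hx
      have h1 : (0:ℝ) < 1 + x := by linarith
      have h2 : (0:ℝ) < 1 - x := by linarith
      have hL := lem1 x ⟨hx0.le, hx1⟩
      have h4 : 4 * x ≤ 4 * x / ((1 + x) * (1 - x)) := by
        rw [le_div_iff₀ (by positivity)]
        nlinarith [mul_pos (mul_pos hx0 hx0) hx0]
      linarith)
  intro t ht
  have := h t ht
  norm_num at this
  linarith

lemma lem3 : ∀ t ∈ Set.Ico (0:ℝ) 1,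
    3 * (Real.log (1 + t) - Real.log (1 - t)) * (1 - t ^ 2) +
      2 * t * ((1 + t) * Real.log (1 + t) + (1 - t) * Real.log (1 - t)) -
      2 * t * (1 - t ^ 2) - 4 * t ≤ 0 := by
  have h := decr_aux
    (f := fun t => 3 * (Real.log (1 + t) - Real.log (1 - t)) * (1 - t ^ 2) +
      2 * t * ((1 + t) * Real.log (1 + t) + (1 - t) * Real.log (1 - t)) -
      2 * t * (1 - t ^ 2) - 4 * t)
    (f' := fun x => 2 * ((1 - x) * Real.log (1 + x) + (1 + x) * Real.log (1 - x) + 3 * x ^ 2))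
    (by
      apply ContinuousOn.sub
      apply ContinuousOn.sub
      apply ContinuousOn.add
      · exact ((continuousOn_const.mul (cont_la.sub cont_lb)).mul (by fun_prop))
      · exact ((continuousOn_const.mul continuousOn_id).mul
          (((continuousOn_const.add continuousOn_id).mul cont_la).add
            ((continuousOn_const.sub continuousOn_id).mul cont_lb)))
      · fun_prop
      · fun_prop)
    (fun x hx => by
      obtain ⟨hx0, hx1⟩ := hx
      have h1 : (0:ℝ) < 1 + x := by linarith
      have h2 : (0:ℝ) < 1 - x := by linarith
      have ha : HasDerivAt (fun t : ℝ => Real.log (1 + t)) (1 / (1 + x)) x :=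
        ((hasDerivAt_id x).const_add 1).log h1.ne'
      have hb : HasDerivAt (fun t : ℝ => Real.log (1 - t)) (-1 / (1 - x)) x :=
        ((hasDerivAt_id x).const_sub 1).log h2.ne'
      have hq : HasDerivAt (fun t : ℝ => 1 - t ^ 2) (-(2 * x ^ 1)) x :=
        (hasDerivAt_pow 2 x).const_sub 1
      have hE := (((hasDerivAt_id x).const_add 1).mul ha).add
        (((hasDerivAt_id x).const_sub 1).mul hb)
      have H := (((((ha.sub hb).const_mul 3).mul hq).add
        (((hasDerivAt_id x).const_mul 2).mul hE)).sub
        (((hasDerivAt_id x).const_mul 2).mul hq)).sub ((hasDerivAt_id x).const_mul 4)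
      exact H.congr_deriv (by simp only [id_eq, Pi.add_apply, Pi.sub_apply, Pi.mul_apply]; field_simp; ring))
    (fun x hx => by
      have := lem2 x ⟨hx.1.le, hx.2⟩
      show 2 * ((1 - x) * Real.log (1 + x) + (1 + x) * Real.log (1 - x) + 3 * x ^ 2) ≤ 0
      linarith)
  intro t ht
  have := h t ht
  norm_num at this
  linarith

lemma lem4 : ∀ t ∈ Set.Ico (0:ℝ) 1,
    2 * ((1 + t) * Real.log (1 + t) + (1 - t) * Real.log (1 - t)) / ((1 + t) * (1 - t)) +
      (Real.log (1 + t) - Real.log (1 - t)) ^ 2 +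
      2 * (Real.log (1 + t) + Real.log (1 - t)) - 4 * t ^ 2 / ((1 + t) * (1 - t)) ≤ 0 := by
  have h := decr_aux
    (f := fun t => 2 * ((1 + t) * Real.log (1 + t) + (1 - t) * Real.log (1 - t)) /
        ((1 + t) * (1 - t)) +
      (Real.log (1 + t) - Real.log (1 - t)) ^ 2 +
      2 * (Real.log (1 + t) + Real.log (1 - t)) - 4 * t ^ 2 / ((1 + t) * (1 - t)))
    (f' := fun x => 2 * (3 * (Real.log (1 + x) - Real.log (1 - x)) * (1 - x ^ 2) +
      2 * x * ((1 + x) * Real.log (1 + x) + (1 - x) * Real.log (1 - x)) -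
      2 * x * (1 - x ^ 2) - 4 * x) / ((1 + x) * (1 - x)) ^ 2)
    (by
      have hqne : ∀ x ∈ Set.Ico (0:ℝ) 1, (1 + x) * (1 - x) ≠ 0 := fun x hx => by
        have h1 := hx.1; have h2 := hx.2; exact ne_of_gt (by nlinarith)
      apply ContinuousOn.sub
      apply ContinuousOn.add
      apply ContinuousOn.add
      · exact (continuousOn_const.mul
          (((continuousOn_const.add continuousOn_id).mul cont_la).add
            ((continuousOn_const.sub continuousOn_id).mul cont_lb))).div (by fun_prop) hqne
      · exact (cont_la.sub cont_lb).pow 2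
      · exact continuousOn_const.mul (cont_la.add cont_lb)
      · exact ContinuousOn.div (by fun_prop) (by fun_prop) hqne)
    (fun x hx => by
      obtain ⟨hx0, hx1⟩ := hx
      have h1 : (0:ℝ) < 1 + x := by linarith
      have h2 : (0:ℝ) < 1 - x := by linarith
      have hqne : (1 + x) * (1 - x) ≠ 0 := by positivity
      have ha : HasDerivAt (fun t : ℝ => Real.log (1 + t)) (1 / (1 + x)) x :=
        ((hasDerivAt_id x).const_add 1).log h1.ne'
      have hb : HasDerivAt (fun t : ℝ => Real.log (1 - t)) (-1 / (1 - x)) x :=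
        ((hasDerivAt_id x).const_sub 1).log h2.ne'
      have hq : HasDerivAt (fun t : ℝ => (1 + t) * (1 - t)) (1 * (1 - x) + (1 + x) * -1) x :=
        ((hasDerivAt_id x).const_add 1).mul ((hasDerivAt_id x).const_sub 1)
      have hE := (((hasDerivAt_id x).const_add 1).mul ha).add
        (((hasDerivAt_id x).const_sub 1).mul hb)
      have H := ((((hE.const_mul 2).div hq hqne).add ((ha.sub hb).pow 2)).add
        ((ha.add hb).const_mul 2)).sub (((hasDerivAt_pow 2 x).const_mul 4).div hq hqne)
      exact H.congr_deriv (by simp only [id_eq, Pi.add_apply, Pi.sub_apply, Pi.mul_apply]; field_simp; ring))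
    (fun x hx => by
      obtain ⟨hx0, hx1⟩ := hx
      have h1 : (0:ℝ) < 1 + x := by linarith
      have h2 : (0:ℝ) < 1 - x := by linarith
      have h3 := lem3 x ⟨hx0.le, hx1⟩
      apply div_nonpos_of_nonpos_of_nonneg
      · linarith
      · positivity)
  intro t ht
  have := h t ht
  norm_num at this
  linarith

lemma lem5 : ∀ t ∈ Set.Ico (0:ℝ) 1,
    (Real.log (1 + t) - Real.log (1 - t)) *
        ((1 + t) * Real.log (1 + t) + (1 - t) * Real.log (1 - t)) +
      2 * t * (Real.log (1 + t) + Real.log (1 - t)) ≤ 0 := by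
  have h := decr_aux
    (f := fun t => (Real.log (1 + t) - Real.log (1 - t)) *
        ((1 + t) * Real.log (1 + t) + (1 - t) * Real.log (1 - t)) +
      2 * t * (Real.log (1 + t) + Real.log (1 - t)))
    (f' := fun x => 2 * ((1 + x) * Real.log (1 + x) + (1 - x) * Real.log (1 - x)) /
        ((1 + x) * (1 - x)) +
      (Real.log (1 + x) - Real.log (1 - x)) ^ 2 +
      2 * (Real.log (1 + x) + Real.log (1 - x)) - 4 * x ^ 2 / ((1 + x) * (1 - x)))
    (by
      apply ContinuousOn.add
      · exact (cont_la.sub cont_lb).mul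
          (((continuousOn_const.add continuousOn_id).mul cont_la).add
            ((continuousOn_const.sub continuousOn_id).mul cont_lb))
      · exact (continuousOn_const.mul continuousOn_id).mul (cont_la.add cont_lb))
    (fun x hx => by
      obtain ⟨hx0, hx1⟩ := hx
      have h1 : (0:ℝ) < 1 + x := by linarith
      have h2 : (0:ℝ) < 1 - x := by linarith
      have ha : HasDerivAt (fun t : ℝ => Real.log (1 + t)) (1 / (1 + x)) x :=
        ((hasDerivAt_id x).const_add 1).log h1.ne'
      have hb : HasDerivAt (fun t : ℝ => Real.log (1 - t)) (-1 / (1 - x)) x :=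
        ((hasDerivAt_id x).const_sub 1).log h2.ne'
      have hE := (((hasDerivAt_id x).const_add 1).mul ha).add
        (((hasDerivAt_id x).const_sub 1).mul hb)
      have H := ((ha.sub hb).mul hE).add
        (((hasDerivAt_id x).const_mul 2).mul (ha.add hb))
      exact H.congr_deriv (by simp only [id_eq, Pi.add_apply, Pi.sub_apply, Pi.mul_apply]; field_simp; ring))
    (fun x hx => lem4 x ⟨hx.1.le, hx.2⟩)
  intro t ht
  have := h t ht
  norm_num at this
  linarith

theorem stmt11 (t : ℝ) (ht : t ∈ Set.Ioo (0 : ℝ) 1) :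
    ((Real.log (1 + t) - Real.log (1 - t)) / (2 * t)) *
        ((1 + t) * Real.log (1 + t) + (1 - t) * Real.log (1 - t)) +
      Real.log (1 + t) + Real.log (1 - t) ≤ 0 := by
  obtain ⟨ht0, ht1⟩ := ht
  have h5 := lem5 t ⟨ht0.le, ht1⟩
  have ht2 : (0:ℝ) < 2 * t := by linarith
  have key : ((Real.log (1 + t) - Real.log (1 - t)) / (2 * t)) *
        ((1 + t) * Real.log (1 + t) + (1 - t) * Real.log (1 - t)) +
      Real.log (1 + t) + Real.log (1 - t) =
      ((Real.log (1 + t) - Real.log (1 - t)) *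
        ((1 + t) * Real.log (1 + t) + (1 - t) * Real.log (1 - t)) +
      2 * t * (Real.log (1 + t) + Real.log (1 - t))) / (2 * t) := by
    field_simp
    ring
  rw [key]
  exact div_nonpos_of_nonpos_of_nonneg h5 ht2.le
end

section
/- For every n ≥ 2, the quantity d_n = (n+2)·∑_{k=1}^{n} 1/(2k+1) - (n+1)·∑_{k=1}^{n} 1/(2k) is negative. -/
theorem stmt12 (n : ℕ) (hn : 2 ≤ n) :
    ((n : ℝ) + 2) * ∑ k ∈ Finset.Icc 1 n, (1 : ℝ) / (2 * k + 1) -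
      ((n : ℝ) + 1) * ∑ k ∈ Finset.Icc 1 n, (1 : ℝ) / (2 * k) < 0 := by
  induction n, hn using Nat.le_induction with
  | base =>
    rw [show Finset.Icc 1 2 = {1, 2} from rfl]
    norm_num
  | succ n hn ih =>
    have hx : (2:ℝ) ≤ (n:ℝ) := by exact_mod_cast hn
    rw [Finset.sum_Icc_succ_top (by omega : 1 ≤ n + 1),
        Finset.sum_Icc_succ_top (by omega : 1 ≤ n + 1)]
    push_cast
    set A := ∑ k ∈ Finset.Icc 1 n, (1 : ℝ) / (2 * k + 1) with hA
    set B := ∑ k ∈ Finset.Icc 1 n, (1 : ℝ) / (2 * k) with hB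
    set x := (n : ℝ) with hxdef
    have hBA : (1:ℝ)/6 ≤ B - A := by
      rw [hA, hB, ← Finset.sum_sub_distrib]
      have h1 : (1:ℕ) ∈ Finset.Icc 1 n := by
        simp only [Finset.mem_Icc]; omega
      have key := Finset.single_le_sum
        (f := fun k : ℕ => (1:ℝ)/(2*k) - 1/(2*k+1))
        (fun i hi => by
          have hi1 : 1 ≤ i := (Finset.mem_Icc.mp hi).1
          have hpos : (1:ℝ) ≤ (i:ℝ) := by exact_mod_cast hi1
          have h2i : (0:ℝ) < 2*i := by linarith
          have h2i1 : (0:ℝ) < 2*i+1 := by linarith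
          have : (1:ℝ)/(2*i+1) ≤ 1/(2*i) :=
            one_div_le_one_div_of_le h2i (by linarith)
          linarith) h1
      refine le_trans ?_ key
      norm_num
    have h1 : (0:ℝ) < 2*(x+1)+1 := by linarith
    have h2 : (0:ℝ) < 2*(x+1) := by linarith
    have hstep : (x+3)*(1/(2*(x+1)+1)) - (x+2)*(1/(2*(x+1))) ≤ 1/6 := by
      rw [mul_one_div, mul_one_div, div_sub_div _ _ h1.ne' h2.ne',
        div_le_div_iff₀ (by positivity) (by norm_num)]
      nlinarith [sq_nonneg x]
    have expand : (x+1+2)*(A + 1/(2*(x+1)+1)) - (x+1+1)*(B + 1/(2*(x+1)))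
        = ((x+2)*A - (x+1)*B) + (A - B)
          + ((x+3)*(1/(2*(x+1)+1)) - (x+2)*(1/(2*(x+1)))) := by ring
    rw [expand]
    linarith [ih]
end

section
/- For all positive reals a ≠ b, λ_5(a,b) ≤ S(a,b), where λ_5(a,b) = (2/3)·(a⁶+b⁶-2((a+b)/2)⁶)/(a⁵+b⁵-2((a+b)/2)⁵) and S(a,b) = a^{a/(a+b)}·b^{b/(a+b)}. -/
open Real

lemma aux1 (t : ℝ) (ht : 0 ≤ t) : Real.exp (2*t) * (1-t) ≤ 1 + t := by
  have key : MonotoneOn (fun x : ℝ => 1 + x - Real.exp (2*x) * (1-x)) (Set.Ici 0) := by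
    apply monotoneOn_of_deriv_nonneg (convex_Ici 0)
    · fun_prop
    · intro x hx
      apply DifferentiableAt.differentiableWithinAt
      fun_prop
    · intro x hx
      have hd : HasDerivAt (fun x : ℝ => 1 + x - Real.exp (2*x) * (1-x))
          (1 - Real.exp (2*x) * (1 - 2*x)) x := by
        have h1 : HasDerivAt (fun x : ℝ => Real.exp (2*x)) (Real.exp (2*x) * 2) x := by
          simpa using ((hasDerivAt_id x).const_mul 2).exp
        have h2 : HasDerivAt (fun x : ℝ => (1:ℝ) - x) (-1) x := by
          simpa using (hasDerivAt_id x).const_sub (1:ℝ)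
        have h3 := h1.mul h2
        have h4 := ((hasDerivAt_id x).const_add 1).sub h3
        convert h4 using 1
        · rfl
        · rfl
        · rfl
        · ring
      rw [hd.deriv]
      have hmul : Real.exp (2*x) * Real.exp (-(2*x)) = 1 := by
        rw [← Real.exp_add]; simp
      nlinarith [Real.add_one_le_exp (-(2*x)), Real.exp_pos (2*x)]
  have h0 := key (Set.self_mem_Ici) (Set.mem_Ici.mpr ht) ht
  simp only at h0
  norm_num at h0
  linarith [h0]

lemma aux2 (t : ℝ) (ht0 : 0 ≤ t) (ht1 : t < 1) :
    2*t ≤ Real.log (1+t) - Real.log (1-t) := by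
  have h1t : (0:ℝ) < 1 - t := by linarith
  have h1t' : (0:ℝ) < 1 + t := by linarith
  have h := aux1 t ht0
  have hle : Real.exp (2*t) ≤ (1+t)/(1-t) := by
    rw [le_div_iff₀ h1t]; exact h
  have := Real.log_le_log (Real.exp_pos _) hle
  rwa [Real.log_exp, Real.log_div h1t'.ne' h1t.ne'] at this

lemma aux3 (t : ℝ) (ht0 : 0 ≤ t) (ht1 : t < 1) :
    t^2 ≤ (1-t)*Real.log (1-t) + (1+t)*Real.log (1+t) := by
  have key : MonotoneOn
      (fun x : ℝ => (1-x)*Real.log (1-x) + (1+x)*Real.log (1+x) - x^2)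
      (Set.Ico 0 1) := by
    apply monotoneOn_of_deriv_nonneg (convex_Ico 0 1)
    · apply ContinuousOn.sub
      apply ContinuousOn.add
      · exact (continuousOn_const.sub continuousOn_id).mul
          ((continuousOn_const.sub continuousOn_id).log
            (fun x hx => by simp only [Set.mem_Ico] at hx; intro h; simp only [Pi.sub_apply, id] at h; linarith [hx.2]))
      · exact (continuousOn_const.add continuousOn_id).mul
          ((continuousOn_const.add continuousOn_id).log
            (fun x hx => by simp only [Set.mem_Ico] at hx; intro h; simp only [Pi.add_apply, id] at h; linarith [hx.1]))
      · exact (continuousOn_pow 2)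
    · intro x hx
      rw [interior_Ico] at hx
      obtain ⟨hx0, hx1⟩ := hx
      apply DifferentiableAt.differentiableWithinAt
      have d1 : (1:ℝ) - x ≠ 0 := by linarith
      have d2 : (1:ℝ) + x ≠ 0 := by linarith
      fun_prop (disch := assumption)
    · intro x hx
      rw [interior_Ico] at hx
      obtain ⟨hx0, hx1⟩ := hx
      have h1x : (0:ℝ) < 1 - x := by linarith
      have h1x' : (0:ℝ) < 1 + x := by linarith
      have hd : HasDerivAt
          (fun x : ℝ => (1-x)*Real.log (1-x) + (1+x)*Real.log (1+x) - x^2)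
          ((Real.log (1+x) - Real.log (1-x)) - 2*x) x := by
        have hA : HasDerivAt (fun x : ℝ => (1:ℝ) - x) (-1) x := by
          simpa using (hasDerivAt_id x).const_sub (1:ℝ)
        have hB : HasDerivAt (fun x : ℝ => (1:ℝ) + x) 1 x := by
          simpa using (hasDerivAt_id x).const_add 1
        have hlogA : HasDerivAt (fun x : ℝ => Real.log (1-x)) (-1 / (1-x)) x :=
          hA.log h1x.ne'
        have hlogB : HasDerivAt (fun x : ℝ => Real.log (1+x)) (1 / (1+x)) x :=
          hB.log h1x'.ne'
        have h1 := hA.mul hlogA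
        have h2 := hB.mul hlogB
        have h3 := (h1.add h2).sub (hasDerivAt_pow 2 x)
        convert h3 using 1
        · rfl
        · rfl
        · rfl
        · field_simp
          ring
      rw [hd.deriv]
      have := aux2 x hx0.le hx1
      linarith
  have h0 := key ⟨le_refl 0, by norm_num⟩ ⟨ht0, ht1⟩ ht0
  norm_num at h0
  linarith [h0]

lemma core (s t : ℝ) (hs : 0 < s) (ht0 : 0 < t) (ht1 : t < 1) :
    (2 / 3 : ℝ) *
        (((s*(1-t)) ^ 6 + (s*(1+t)) ^ 6 - 2 * ((s*(1-t) + s*(1+t)) / 2) ^ 6) /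
          ((s*(1-t)) ^ 5 + (s*(1+t)) ^ 5 - 2 * ((s*(1-t) + s*(1+t)) / 2) ^ 5)) ≤
      (s*(1-t)) ^ ((s*(1-t)) / ((s*(1-t)) + (s*(1+t)))) *
      (s*(1+t)) ^ ((s*(1+t)) / ((s*(1-t)) + (s*(1+t)))) := by
  have h1t : (0:ℝ) < 1 - t := by linarith
  have h1t' : (0:ℝ) < 1 + t := by linarith
  have ha : 0 < s*(1-t) := mul_pos hs h1t
  have hb : 0 < s*(1+t) := mul_pos hs h1t'
  have h2t : (0:ℝ) < 2 + t^2 := by positivity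
  -- exponents
  have e1 : (s*(1-t)) / ((s*(1-t)) + (s*(1+t))) = (1-t)/2 := by
    rw [show (s*(1-t)) + (s*(1+t)) = s*2 by ring, show s*(1-t) = s*(1-t) from rfl]
    rw [mul_div_mul_left _ _ hs.ne']
  have e2 : (s*(1+t)) / ((s*(1-t)) + (s*(1+t))) = (1+t)/2 := by
    rw [show (s*(1-t)) + (s*(1+t)) = s*2 by ring]
    rw [mul_div_mul_left _ _ hs.ne']
  rw [e1, e2]
  -- RHS = s * exp(φ/2)
  have hR : (s*(1-t)) ^ ((1-t)/2) * (s*(1+t)) ^ ((1+t)/2)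
      = s * Real.exp (((1-t)*Real.log (1-t) + (1+t)*Real.log (1+t))/2) := by
    rw [Real.rpow_def_of_pos ha, Real.rpow_def_of_pos hb, ← Real.exp_add,
      Real.log_mul hs.ne' h1t.ne', Real.log_mul hs.ne' h1t'.ne']
    rw [show (Real.log s + Real.log (1-t)) * ((1-t)/2) +
        (Real.log s + Real.log (1+t)) * ((1+t)/2)
        = Real.log s + ((1-t)*Real.log (1-t) + (1+t)*Real.log (1+t))/2 by ring]
    rw [Real.exp_add, Real.exp_log hs]
  rw [hR]
  -- LHS = s * ((2+2t²+(2/15)t⁴)/(2+t²))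
  have hL : (2 / 3 : ℝ) *
        (((s*(1-t)) ^ 6 + (s*(1+t)) ^ 6 - 2 * ((s*(1-t) + s*(1+t)) / 2) ^ 6) /
          ((s*(1-t)) ^ 5 + (s*(1+t)) ^ 5 - 2 * ((s*(1-t) + s*(1+t)) / 2) ^ 5))
      = s * ((2 + 2*t^2 + (2/15)*t^4) / (2 + t^2)) := by
    rw [show (s*(1-t)) ^ 6 + (s*(1+t)) ^ 6 - 2 * ((s*(1-t) + s*(1+t)) / 2) ^ 6
        = 2*s^6*t^2*(15 + 15*t^2 + t^4) by ring,
      show (s*(1-t)) ^ 5 + (s*(1+t)) ^ 5 - 2 * ((s*(1-t) + s*(1+t)) / 2) ^ 5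
        = 10*s^5*t^2*(2 + t^2) by ring]
    have hne1 : (10*s^5*t^2*(2 + t^2)) ≠ 0 := by positivity
    field_simp
    ring
  rw [hL]
  apply mul_le_mul_of_nonneg_left _ hs.le
  calc (2 + 2*t^2 + (2/15)*t^4) / (2 + t^2)
      ≤ (1 + t^2/4)^2 := by
        rw [div_le_iff₀ h2t]
        nlinarith [sq_nonneg t, sq_nonneg (t^2), pow_pos ht0 4, pow_pos ht0 6]
    _ ≤ Real.exp (t^2/2) := by
        have h := Real.add_one_le_exp (t^2/4)
        have hnn : (0:ℝ) ≤ 1 + t^2/4 := by positivity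
        have hsq : (1 + t^2/4)^2 ≤ Real.exp (t^2/4) ^ 2 := by
          apply pow_le_pow_left₀ hnn (by linarith)
        have hexp : Real.exp (t^2/4) ^ 2 = Real.exp (t^2/2) := by
          rw [sq, ← Real.exp_add]; ring_nf
        rwa [hexp] at hsq
    _ ≤ Real.exp (((1-t)*Real.log (1-t) + (1+t)*Real.log (1+t))/2) := by
        rw [Real.exp_le_exp]
        have := aux3 t ht0.le ht1
        linarith

lemma helper (a b : ℝ) (ha : 0 < a) (hb : 0 < b) (hlt : a < b) :
    (2 / 3 : ℝ) *
        ((a ^ 6 + b ^ 6 - 2 * ((a + b) / 2) ^ 6) /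
          (a ^ 5 + b ^ 5 - 2 * ((a + b) / 2) ^ 5)) ≤
      a ^ (a / (a + b)) * b ^ (b / (a + b)) := by
  have hab0 : 0 < a + b := by linarith
  set s := (a+b)/2 with hs_def
  set t := (b-a)/(a+b) with ht_def
  have hs : 0 < s := by positivity
  have ht0 : 0 < t := div_pos (by linarith) hab0
  have ht1 : t < 1 := (div_lt_one hab0).2 (by linarith)
  have h_a : a = s*(1-t) := by
    rw [hs_def, ht_def]; field_simp; ring
  have h_b : b = s*(1+t) := by
    rw [hs_def, ht_def]; field_simp; ring
  have := core s t hs ht0 ht1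
  rw [← h_a, ← h_b] at this
  exact this

theorem stmt15 (a b : ℝ) (ha : 0 < a) (hb : 0 < b) (hab : a ≠ b) :
    (2 / 3 : ℝ) *
        ((a ^ 6 + b ^ 6 - 2 * ((a + b) / 2) ^ 6) /
          (a ^ 5 + b ^ 5 - 2 * ((a + b) / 2) ^ 5)) ≤
      a ^ (a / (a + b)) * b ^ (b / (a + b)) := by
  rcases hab.lt_or_gt with h | h
  · exact helper a b ha hb h
  · have H := helper b a hb ha h
    calc (2 / 3 : ℝ) *
        ((a ^ 6 + b ^ 6 - 2 * ((a + b) / 2) ^ 6) /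
          (a ^ 5 + b ^ 5 - 2 * ((a + b) / 2) ^ 5))
        = (2 / 3 : ℝ) *
        ((b ^ 6 + a ^ 6 - 2 * ((b + a) / 2) ^ 6) /
          (b ^ 5 + a ^ 5 - 2 * ((b + a) / 2) ^ 5)) := by ring_nf
      _ ≤ b ^ (b / (b + a)) * a ^ (a / (b + a)) := H
      _ = a ^ (a / (a + b)) * b ^ (b / (a + b)) := by
          rw [add_comm b a, mul_comm]
end

section
/- For all t ∈ (0,1), log(1 + t²/2) ≤ (1/2)·((1+t)log(1+t) + (1-t)log(1-t)). -/
open Real Set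

private lemma hasDerivAt_log1p (t : ℝ) (h : -1 < t) :
    HasDerivAt (fun x : ℝ => Real.log (1 + x)) (1 / (1 + t)) t := by
  have h1 : HasDerivAt (fun x : ℝ => 1 + x) 1 t := (hasDerivAt_id t).const_add 1
  have h2 := (Real.hasDerivAt_log (by linarith : (1 + t) ≠ 0)).comp t h1
  simpa [one_div, Function.comp_def] using h2

private lemma hasDerivAt_log1m (t : ℝ) (h : t < 1) :
    HasDerivAt (fun x : ℝ => Real.log (1 - x)) (-(1 / (1 - t))) t := by
  have h1 : HasDerivAt (fun x : ℝ => 1 - x) (-1) t := (hasDerivAt_id t).const_sub 1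
  have h2 := (Real.hasDerivAt_log (by linarith : (1 - t) ≠ 0)).comp t h1
  have : (1 - t)⁻¹ * (-1) = -(1 / (1 - t)) := by field_simp
  simpa [this, Function.comp_def] using h2

private lemma contOn_log1p : ContinuousOn (fun x : ℝ => Real.log (1 + x)) (Ico 0 1) := by
  apply ContinuousOn.log
  · exact (continuous_const.add continuous_id).continuousOn
  · intro x hx; simp only [mem_Ico] at hx; intro hc; linarith [hx.1]

private lemma contOn_log1m : ContinuousOn (fun x : ℝ => Real.log (1 - x)) (Ico 0 1) := by
  apply ContinuousOn.log
  · exact (continuous_const.sub continuous_id).continuousOn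
  · intro x hx; simp only [mem_Ico] at hx; intro hc; linarith [hx.2]

/-- `log(1+t) - log(1-t) - 2t ≥ 0` on `[0,1)`. -/
private lemma artanh_ge (t : ℝ) (h0 : 0 ≤ t) (h1 : t < 1) :
    0 ≤ Real.log (1 + t) - Real.log (1 - t) - 2 * t := by
  set H : ℝ → ℝ := fun x => Real.log (1 + x) - Real.log (1 - x) - 2 * x with hH
  have hderiv : ∀ x ∈ Ioo (0 : ℝ) 1,
      HasDerivAt H (1 / (1 + x) + 1 / (1 - x) - 2) x := by
    intro x hx
    have hx1 : -1 < x := by linarith [hx.1]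
    have hx2 : x < 1 := hx.2
    have d1 := hasDerivAt_log1p x hx1
    have d2 := hasDerivAt_log1m x hx2
    have d3 : HasDerivAt (fun y : ℝ => 2 * y) 2 x := by
      simpa using (hasDerivAt_id x).const_mul 2
    have := (d1.sub d2).sub d3
    refine this.congr_deriv ?_
    ring
  have hmono : MonotoneOn H (Ico 0 1) := by
    apply monotoneOn_of_deriv_nonneg (convex_Ico 0 1)
    · exact (contOn_log1p.sub contOn_log1m).sub (continuous_const.mul continuous_id).continuousOn
    · rw [interior_Ico]
      intro x hx
      exact (hderiv x hx).differentiableAt.differentiableWithinAt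
    · rw [interior_Ico]
      intro x hx
      rw [(hderiv x hx).deriv]
      have hx1 : (0:ℝ) < 1 + x := by linarith [hx.1]
      have hx2 : (0:ℝ) < 1 - x := by linarith [hx.2]
      rw [div_add_div _ _ (ne_of_gt hx1) (ne_of_gt hx2), sub_nonneg, le_div_iff₀ (by positivity)]
      nlinarith [sq_nonneg x, hx.1.le]
  have h0mem : (0:ℝ) ∈ Ico (0:ℝ) 1 := by constructor <;> norm_num
  have htmem : t ∈ Ico (0:ℝ) 1 := ⟨h0, h1⟩
  have := hmono h0mem htmem h0
  simpa [hH] using this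

/-- `(1+t)log(1+t) + (1-t)log(1-t) - t² ≥ 0` on `[0,1)`. -/
private lemma key (t : ℝ) (h0 : 0 ≤ t) (h1 : t < 1) :
    t ^ 2 ≤ (1 + t) * Real.log (1 + t) + (1 - t) * Real.log (1 - t) := by
  set G : ℝ → ℝ := fun x =>
    (1 + x) * Real.log (1 + x) + (1 - x) * Real.log (1 - x) - x ^ 2 with hG
  have hderiv : ∀ x ∈ Ioo (0 : ℝ) 1,
      HasDerivAt G (Real.log (1 + x) - Real.log (1 - x) - 2 * x) x := by
    intro x hx
    have hx1 : -1 < x := by linarith [hx.1]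
    have hx2 : x < 1 := hx.2
    have ha : HasDerivAt (fun y : ℝ => 1 + y) 1 x := (hasDerivAt_id x).const_add 1
    have hb : HasDerivAt (fun y : ℝ => 1 - y) (-1) x := (hasDerivAt_id x).const_sub 1
    have d1 := ha.mul (hasDerivAt_log1p x hx1)
    have d2 := hb.mul (hasDerivAt_log1m x hx2)
    have d3 : HasDerivAt (fun y : ℝ => y ^ 2) (2 * x) x := by
      simpa using (hasDerivAt_pow 2 x)
    have := (d1.add d2).sub d3
    refine this.congr_deriv ?_
    have hx1' : (1 + x) ≠ 0 := by linarith
    have hx2' : (1 - x) ≠ 0 := by linarith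
    field_simp
    ring
  have hmono : MonotoneOn G (Ico 0 1) := by
    apply monotoneOn_of_deriv_nonneg (convex_Ico 0 1)
    · apply ContinuousOn.sub
      · exact ((continuous_const.add continuous_id).continuousOn.mul contOn_log1p).add
          ((continuous_const.sub continuous_id).continuousOn.mul contOn_log1m)
      · exact (continuous_pow 2).continuousOn
    · rw [interior_Ico]
      intro x hx
      exact (hderiv x hx).differentiableAt.differentiableWithinAt
    · rw [interior_Ico]
      intro x hx
      rw [(hderiv x hx).deriv]
      exact artanh_ge x hx.1.le hx.2
  have h0mem : (0:ℝ) ∈ Ico (0:ℝ) 1 := by constructor <;> norm_num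
  have htmem : t ∈ Ico (0:ℝ) 1 := ⟨h0, h1⟩
  have := hmono h0mem htmem h0
  simp only [hG] at this
  norm_num at this
  linarith

theorem stmt16 (t : ℝ) (ht : t ∈ Set.Ioo (0 : ℝ) 1) :
    Real.log (1 + t ^ 2 / 2) ≤
      (1 / 2) * ((1 + t) * Real.log (1 + t) + (1 - t) * Real.log (1 - t)) := by
  obtain ⟨h0, h1⟩ := ht
  have hlog : Real.log (1 + t ^ 2 / 2) ≤ t ^ 2 / 2 := by
    have := Real.log_le_sub_one_of_pos (show (0:ℝ) < 1 + t ^ 2 / 2 by positivity)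
    linarith
  have hk := key t h0.le h1
  linarith
end
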